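/- arXiv:1502.01573 — 5 statements merged into one kernel-verified Lean document; each statement's English description precedes it below -/
import Mathlib

section
/- Let T be an n×n complex matrix that is nilpotent and satisfies ‖T‖ = 1 and ‖T^(n−1)‖ = 1 (operator norm). Then T is unitarily similar to S, i.e., there exists a unitary matrix U ∈ Mₙ(ℂ) with T = U S U*. -/
open scoped Matrix Matrix.Norms.L2Operator

noncomputable section

/-- The `n × n` nilpotent Jordan block `S`: ones on the superdiagonal, zeros elsewhere. -/
def jordanS (n : ℕ) : Matrix (Fin n) (Fin n) ℂ :=
  Matrix.of fun i j => if (i : ℕ) + 1 = (j : ℕ) then 1 else 0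

section Aux

variable {n : ℕ}

lemma keyInner (f : EuclideanSpace ℂ (Fin n) →L[ℂ] EuclideanSpace ℂ (Fin n))
    (hf : ∀ v, ‖f v‖ ≤ ‖v‖) (a b : EuclideanSpace ℂ (Fin n))
    (ha : ‖f a‖ = ‖a‖) (hb : ‖f b‖ = ‖b‖) :
    (inner ℂ (f a) (f b) : ℂ) = inner ℂ a b := by
  set φ : ℂ := inner ℂ (f a) (f b) - inner ℂ a b with hφ
  have hc : ‖f (a + (starRingEnd ℂ) φ • b)‖ ≤ ‖a + (starRingEnd ℂ) φ • b‖ := hf _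
  rw [map_add, map_smul] at hc
  have h2 : ‖f a + (starRingEnd ℂ) φ • f b‖^2 ≤ ‖a + (starRingEnd ℂ) φ • b‖^2 :=
    pow_le_pow_left₀ (norm_nonneg _) hc 2
  rw [norm_add_sq (𝕜 := ℂ), norm_add_sq (𝕜 := ℂ)] at h2
  simp only [inner_smul_right, norm_smul, mul_pow, ha, hb] at h2
  have h3 : RCLike.re ((starRingEnd ℂ) φ * φ) ≤ 0 := by
    have he : (starRingEnd ℂ) φ * φ =
        (starRingEnd ℂ) φ * (inner ℂ (f a) (f b) : ℂ) - (starRingEnd ℂ) φ * inner ℂ a b := by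
      rw [hφ]; ring
    rw [he, map_sub]; linarith
  rw [RCLike.conj_mul] at h3
  have h4 : ‖φ‖^2 ≤ 0 := by exact_mod_cast h3
  have h5 : φ = 0 := by
    have := sq_nonneg ‖φ‖
    have : ‖φ‖^2 = 0 := le_antisymm h4 this
    simpa using pow_eq_zero_iff (n := 2) (by norm_num) |>.mp this
  exact sub_eq_zero.mp h5

lemma keyZero (f : EuclideanSpace ℂ (Fin n) →L[ℂ] EuclideanSpace ℂ (Fin n))
    (hf : ∀ v, ‖f v‖ ≤ ‖v‖) (a b : EuclideanSpace ℂ (Fin n))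
    (ha : ‖a‖ = 1) (hfa : ‖f a‖ = 1) (hb1 : ‖b‖ = 1) (hfb : f b = 0) :
    (inner ℂ a b : ℂ) = 0 := by
  set g : ℂ := inner ℂ a b with hg
  have hc : ‖f (a + (-(starRingEnd ℂ) g) • b)‖ ≤ ‖a + (-(starRingEnd ℂ) g) • b‖ := hf _
  rw [map_add, map_smul, hfb, smul_zero, add_zero, hfa] at hc
  have h2 : (1:ℝ) ≤ ‖a + (-(starRingEnd ℂ) g) • b‖^2 := by
    nlinarith [norm_nonneg (a + (-(starRingEnd ℂ) g) • b)]
  rw [norm_add_sq (𝕜 := ℂ)] at h2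
  simp only [inner_smul_right, norm_smul, mul_pow, ha, hb1] at h2
  have he : (-(starRingEnd ℂ) g) * g = -((‖g‖:ℂ)^2) := by rw [neg_mul, RCLike.conj_mul]; norm_cast
  rw [← hg] at h2
  rw [he] at h2
  have h7 : RCLike.re (-((‖g‖:ℂ)^2)) = -(‖g‖^2) := by
    rw [map_neg, ← Complex.ofReal_pow, RCLike.re_to_complex, Complex.ofReal_re]
  rw [h7] at h2
  have h4 : ‖g‖^2 ≤ 0 := by
    have : ‖(-(starRingEnd ℂ) g)‖ = ‖g‖ := by rw [norm_neg, RCLike.norm_conj]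
    rw [this] at h2
    nlinarith
  have h5 : g = 0 := by
    have h6 : ‖g‖^2 = 0 := le_antisymm h4 (sq_nonneg _)
    simpa using pow_eq_zero_iff (n := 2) (by norm_num) |>.mp h6
  exact h5

end Aux

theorem stmt0 (n : ℕ) (hn : 0 < n) (T : Matrix (Fin n) (Fin n) ℂ)
    (hnil : IsNilpotent T) (hT : ‖T‖ = 1) (hT' : ‖T ^ (n - 1)‖ = 1) :
    ∃ U : Matrix (Fin n) (Fin n) ℂ, Uᴴ * U = 1 ∧ T = U * jordanS n * Uᴴ := by
  obtain ⟨m, rfl⟩ : ∃ m, n = m + 1 := ⟨n - 1, (Nat.succ_pred_eq_of_pos hn).symm⟩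
  -- T ^ (m + 1) = 0
  have hTn : T ^ (m + 1) = 0 := by
    have hφ : IsNilpotent (Matrix.toLinAlgEquiv' T) := hnil.map (Matrix.toLinAlgEquiv' : _ ≃ₐ[ℂ] _)
    have hch := hφ.charpoly_eq_X_pow_finrank
    have hca := LinearMap.aeval_self_charpoly (Matrix.toLinAlgEquiv' T)
    rw [hch] at hca
    simp only [map_pow, Polynomial.aeval_X, Module.finrank_fin_fun] at hca
    have h2 : Matrix.toLinAlgEquiv' (T ^ (m + 1)) = 0 := by rw [map_pow]; exact hca
    exact Matrix.toLinAlgEquiv'.injective (h2.trans (map_zero _).symm)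
  -- transfer to the CLM
  set f : EuclideanSpace ℂ (Fin (m + 1)) →L[ℂ] EuclideanSpace ℂ (Fin (m + 1)) :=
    Matrix.toEuclideanCLM (𝕜 := ℂ) T with hfdef
  have hnormf : ‖f‖ = 1 := hT
  have hfpow : ∀ k : ℕ, Matrix.toEuclideanCLM (𝕜 := ℂ) (T ^ k) = f ^ k := fun k =>
    map_pow (Matrix.toEuclideanCLM (𝕜 := ℂ)) T k
  have hfn : f ^ (m + 1) = 0 := by rw [← hfpow, hTn, map_zero]
  have hnormfm : ‖f ^ m‖ = 1 := by
    rw [← hfpow]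
    have : ‖T ^ m‖ = 1 := by simpa using hT'
    exact this
  have hcontr : ∀ v, ‖f v‖ ≤ ‖v‖ := fun v => by
    calc ‖f v‖ ≤ ‖f‖ * ‖v‖ := f.le_opNorm v
    _ = ‖v‖ := by rw [hnormf, one_mul]
  -- attainment
  obtain ⟨x, hx1, hgx⟩ : ∃ x : EuclideanSpace ℂ (Fin (m + 1)), ‖x‖ = 1 ∧ ‖(f ^ m) x‖ = ‖f ^ m‖ := by
    have hy0 : (EuclideanSpace.single (⟨0, hn⟩ : Fin (m + 1)) (1:ℂ)) ∈
        Metric.sphere (0 : EuclideanSpace ℂ (Fin (m + 1))) 1 := by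
      rw [mem_sphere_zero_iff_norm, EuclideanSpace.norm_single]; norm_num
    obtain ⟨x, hxS, hxmax⟩ := (isCompact_sphere (0 : EuclideanSpace ℂ (Fin (m + 1))) 1).exists_isMaxOn
      ⟨_, hy0⟩ ((continuous_norm.comp (f ^ m).continuous).continuousOn)
    have hx1 : ‖x‖ = 1 := mem_sphere_zero_iff_norm.mp hxS
    refine ⟨x, hx1, le_antisymm ?_ ?_⟩
    · calc ‖(f ^ m) x‖ ≤ ‖f ^ m‖ * ‖x‖ := (f ^ m).le_opNorm x
      _ = ‖f ^ m‖ := by rw [hx1, mul_one]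
    refine (f ^ m).opNorm_le_bound (norm_nonneg _) fun y => ?_
    by_cases hy : y = 0
    · simp [hy]
    · have hny : ‖y‖ ≠ 0 := norm_ne_zero_iff.mpr hy
      have hmem : ((‖y‖:ℂ)⁻¹ • y) ∈ Metric.sphere (0 : EuclideanSpace ℂ (Fin (m + 1))) 1 := by
        rw [mem_sphere_zero_iff_norm, norm_smul, norm_inv, Complex.norm_real, norm_norm]
        field_simp
      have h5 : ‖(f ^ m) ((‖y‖:ℂ)⁻¹ • y)‖ ≤ ‖(f ^ m) x‖ := hxmax hmem
      have hgy : (f ^ m) y = (‖y‖:ℂ) • (f ^ m) ((‖y‖:ℂ)⁻¹ • y) := by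
        rw [← map_smul, smul_inv_smul₀ (by exact_mod_cast hny)]
      rw [hgy, norm_smul, Complex.norm_real, norm_norm, mul_comm]
      exact mul_le_mul_of_nonneg_right h5 (norm_nonneg _)
  rw [hnormfm] at hgx
  -- the orbit
  set e : ℕ → EuclideanSpace ℂ (Fin (m + 1)) := fun k => (f ^ k) x with hedef
  have hstep : ∀ k, f (e k) = e (k + 1) := fun k => by
    rw [hedef]; simp only; rw [pow_succ']; rfl
  have hcpow : ∀ (k : ℕ) (v : EuclideanSpace ℂ (Fin (m + 1))), ‖(f ^ k) v‖ ≤ ‖v‖ := by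
    intro k
    induction k with
    | zero => intro v; simp
    | succ k ih =>
      intro v
      rw [pow_succ']
      calc ‖(f * f ^ k) v‖ = ‖f ((f ^ k) v)‖ := rfl
      _ ≤ ‖(f ^ k) v‖ := hcontr _
      _ ≤ ‖v‖ := ih v
  have hem : ‖e m‖ = 1 := hgx
  have h1 : ∀ k, k ≤ m → ‖e k‖ = 1 := by
    intro k hk
    refine le_antisymm (by simpa [hedef, hx1] using hcpow k x) ?_
    have hsplit : (f ^ (m - k)) (e k) = e m := by
      rw [hedef]
      simp only
      rw [← ContinuousLinearMap.mul_apply, ← pow_add, Nat.sub_add_cancel hk]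
    calc (1:ℝ) = ‖e m‖ := hem.symm
    _ = ‖(f ^ (m - k)) (e k)‖ := by rw [hsplit]
    _ ≤ ‖e k‖ := hcpow _ _
  have hfem : f (e m) = 0 := by
    rw [hstep]
    rw [hedef]
    simp only
    rw [hfn]
    rfl
  -- orthogonality
  have hzero : ∀ (t j d : ℕ), 1 ≤ d → j + d + t = m → (inner ℂ (e j) (e (j + d)) : ℂ) = 0 := by
    intro t
    induction t with
    | zero =>
      intro j d hd hjd
      rw [Nat.add_zero] at hjd
      have hj1 : j + 1 ≤ m := by omega
      rw [hjd]
      exact keyZero f hcontr (e j) (e m) (h1 j (by omega))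
        (by rw [hstep]; exact h1 (j+1) hj1) hem hfem
    | succ t ih =>
      intro j d hd hjd
      have hj1 : j + 1 ≤ m := by omega
      have hjd1 : j + d + 1 ≤ m := by omega
      have := keyInner f hcontr (e j) (e (j + d))
        (by rw [hstep, h1 (j+1) hj1, h1 j (by omega)])
        (by rw [hstep, h1 (j+d+1) hjd1, h1 (j+d) (by omega)])
      rw [hstep, hstep] at this
      rw [← this]
      have harr : j + d + 1 = (j + 1) + d := by omega
      rw [harr]
      exact ih (j + 1) d hd (by omega)
  have hGram : ∀ j k : ℕ, j ≤ m → k ≤ m →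
      (inner ℂ (e j) (e k) : ℂ) = if j = k then 1 else 0 := by
    intro j k hj hk
    rcases lt_trichotomy j k with h | h | h
    · rw [if_neg (by omega)]
      have := hzero (m - k) j (k - j) (by omega) (by omega)
      rwa [show j + (k - j) = k by omega] at this
    · rw [if_pos h, h, inner_self_eq_norm_sq_to_K, h1 k hk]
      norm_num
    · rw [if_neg (by omega)]
      have := hzero (m - j) k (j - k) (by omega) (by omega)
      rw [show k + (j - k) = j by omega] at this
      rw [← inner_conj_symm, this, map_zero]
  -- the unitary
  set U : Matrix (Fin (m + 1)) (Fin (m + 1)) ℂ := Matrix.of fun i k => e (m - (k : ℕ)) i with hUdef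
  have hUU : Uᴴ * U = 1 := by
    ext k l
    rw [Matrix.mul_apply, Matrix.one_apply]
    have hsum : ∑ j, Uᴴ k j * U j l = (inner ℂ (e (m - (k:ℕ))) (e (m - (l:ℕ))) : ℂ) := by
      rw [PiLp.inner_apply]
      apply Finset.sum_congr rfl
      intro j _
      rw [Matrix.conjTranspose_apply, hUdef]
      simp [RCLike.inner_apply, mul_comm]
    rw [hsum, hGram _ _ (by omega) (by omega)]
    have hkl : (m - (k:ℕ) = m - (l:ℕ)) ↔ k = l := by
      constructor
      · intro h
        have hk := k.isLt
        have hl := l.isLt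
        exact Fin.ext (by omega)
      · intro h; rw [h]
    by_cases h : k = l
    · rw [if_pos (hkl.mpr h), if_pos h]
    · rw [if_neg (fun hc => h (hkl.mp hc)), if_neg h]
  have hTU : T * U = U * jordanS (m + 1) := by
    ext i k
    rw [Matrix.mul_apply, Matrix.mul_apply]
    have hlhs : ∑ j, T i j * U j k = (f (e (m - (k:ℕ)))) i := by
      rfl
    rw [hlhs, hstep]
    by_cases hk : (k : ℕ) = 0
    · have h0 : m - (k:ℕ) + 1 = (m + 1) := by omega
      rw [h0]
      have : e (m + 1) = 0 := by rw [hedef]; simp only; rw [hfn]; rfl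
      rw [this]
      have hrhs : ∀ j : Fin (m + 1), U i j * jordanS (m + 1) j k = 0 := by
        intro j
        have : ¬ ((j:ℕ) + 1 = (k:ℕ)) := by omega
        simp [jordanS, this]
      rw [Finset.sum_congr rfl (fun j _ => hrhs j), Finset.sum_const_zero]
      rfl
    · have hk1 : 1 ≤ (k:ℕ) := by omega
      have hkm : (k:ℕ) ≤ m := by have := k.isLt; omega
      set j0 : Fin (m + 1) := ⟨(k:ℕ) - 1, by omega⟩ with hj0
      have hcond : ∀ j : Fin (m + 1), ((j:ℕ) + 1 = (k:ℕ)) ↔ j = j0 := by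
        intro j
        constructor
        · intro h; exact Fin.ext (by simp [hj0]; omega)
        · intro h; rw [h]; simp [hj0]; omega
      have hrhs : ∑ j, U i j * jordanS (m + 1) j k = U i j0 := by
        rw [Finset.sum_congr rfl (fun j _ => by
          rw [show jordanS (m + 1) j k = if j = j0 then 1 else 0 by
            simp only [jordanS, Matrix.of_apply]
            by_cases h : j = j0
            · rw [if_pos ((hcond j).mpr h), if_pos h]
            · rw [if_neg (fun hc => h ((hcond j).mp hc)), if_neg h]])]
        simp
      rw [hrhs, hUdef]
      have : m - ((k:ℕ) - 1) = m - (k:ℕ) + 1 := by omega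
      simp only [Matrix.of_apply]
      rw [this]

  have hUUH : U * Uᴴ = 1 := mul_eq_one_comm.mp hUU
  refine ⟨U, hUU, ?_⟩
  calc T = T * (U * Uᴴ) := by rw [hUUH, mul_one]
  _ = (T * U) * Uᴴ := by rw [mul_assoc]
  _ = (U * jordanS (m + 1)) * Uᴴ := by rw [hTU]
  _ = U * jordanS (m + 1) * Uᴴ := rfl
end
end

section
/- Let φ : 𝒜 → 𝒜 be a continuous multiplicative map (φ(XY) = φ(X)φ(Y) for all X, Y ∈ 𝒜) such that φ(S) = S and φ(αI) = αI for every complex number α. Then φ is the identity map on 𝒜. -/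
open scoped Matrix Matrix.Norms.L2Operator

noncomputable section

/-- The algebra `𝒜` of upper-triangular `n × n` Toeplitz matrices. -/
def toeplitzUpper (n : ℕ) : Set (Matrix (Fin n) (Fin n) ℂ) :=
  {A | (∀ i j : Fin n, (j : ℕ) < (i : ℕ) → A i j = 0) ∧
    ∀ i j i' j' : Fin n, (j : ℤ) - (i : ℤ) = (j' : ℤ) - (i' : ℤ) → A i j = A i' j'}

namespace TU

variable {n : ℕ}

abbrev Mn (n : ℕ) := Matrix (Fin n) (Fin n) ℂ

lemma jordanS_pow_apply : ∀ (k : ℕ) (i j : Fin n),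
    (jordanS n ^ k) i j = if (i : ℕ) + k = (j : ℕ) then 1 else 0 := by
  intro k
  induction k with
  | zero =>
    intro i j
    simp [Matrix.one_apply, Fin.ext_iff, eq_comm]
  | succ k ih =>
    intro i j
    rw [pow_succ, Matrix.mul_apply]
    by_cases hj : (i : ℕ) + (k+1) = (j : ℕ)
    · have hik : (i : ℕ) + k < n := by omega
      rw [Finset.sum_eq_single (⟨(i:ℕ)+k, hik⟩ : Fin n)]
      · rw [ih]
        simp only [jordanS, Matrix.of_apply, if_pos rfl, if_true, one_mul]
        rw [if_pos (show (i:ℕ)+k+1=(j:ℕ) by omega), if_pos hj]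
      · intro b _ hb
        rw [ih]
        have : ¬ ((i:ℕ) + k = (b : ℕ)) := by
          intro h; apply hb; exact Fin.ext h.symm
        rw [if_neg this, zero_mul]
      · intro h; exact absurd (Finset.mem_univ _) h
    · rw [if_neg hj]
      apply Finset.sum_eq_zero
      intro b _
      rw [ih]
      simp only [jordanS, Matrix.of_apply]
      by_cases h1 : (i:ℕ) + k = (b:ℕ)
      · have : ¬ ((b:ℕ) + 1 = (j:ℕ)) := by omega
        rw [if_neg this, mul_zero]
      · rw [if_neg h1, zero_mul]

lemma jordanS_pow_zero_of_le (h : n ≤ k) : (jordanS n ^ k) = 0 := by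
  ext i j
  rw [jordanS_pow_apply]
  have : ¬ ((i:ℕ) + k = (j:ℕ)) := by omega
  simp [this]

/-- coefficient of `A` on the `k`-th superdiagonal (junk value 0 for `k ≥ n`). -/
def coef (A : Mn n) (k : ℕ) : ℂ :=
  if h : k < n then A ⟨0, Nat.lt_of_le_of_lt (Nat.zero_le k) h⟩ ⟨k, h⟩ else 0

lemma coef_of_ge {A : Mn n} {k : ℕ} (h : n ≤ k) : coef A k = 0 := dif_neg (by omega)

lemma coef_add (A B : Mn n) (k : ℕ) : coef (A + B) k = coef A k + coef B k := by
  unfold coef; split <;> simp [Matrix.add_apply]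

lemma coef_sub (A B : Mn n) (k : ℕ) : coef (A - B) k = coef A k - coef B k := by
  unfold coef; split <;> simp [Matrix.sub_apply]

lemma coef_smul (c : ℂ) (A : Mn n) (k : ℕ) : coef (c • A) k = c * coef A k := by
  unfold coef; split <;> simp [Matrix.smul_apply]

lemma coef_zero (k : ℕ) : coef (0 : Mn n) k = 0 := by
  unfold coef; split <;> simp

lemma coef_sum {ι : Type*} (s : Finset ι) (f : ι → Mn n) (k : ℕ) :
    coef (∑ i ∈ s, f i) k = ∑ i ∈ s, coef (f i) k := by
  classical
  induction s using Finset.induction with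
  | empty => simp [coef_zero]
  | insert _ _ h ih => rw [Finset.sum_insert h, Finset.sum_insert h, coef_add, ih]

lemma coef_pow (k j : ℕ) (hk : k < n) :
    coef ((jordanS n) ^ k) j = if j = k then 1 else 0 := by
  unfold coef
  split
  · rw [jordanS_pow_apply]
    simp only []
    by_cases h : j = k
    · simp [h]
    · rw [if_neg (by omega), if_neg h]
  · have : ¬ (j = k) := by omega
    simp [this]

lemma coef_one (hn : 0 < n) (j : ℕ) : coef (1 : Mn n) j = if j = 0 then 1 else 0 := by
  have := coef_pow (n := n) 0 j hn
  simpa using this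

/-! ### membership and representation -/

lemma Spow_mem (k : ℕ) : (jordanS n ^ k) ∈ toeplitzUpper n := by
  constructor
  · intro i j h
    rw [jordanS_pow_apply]
    rw [if_neg (by omega)]
  · intro i j i' j' h
    rw [jordanS_pow_apply, jordanS_pow_apply]
    by_cases h1 : (i:ℕ) + k = (j:ℕ)
    · rw [if_pos h1, if_pos (by omega)]
    · rw [if_neg h1, if_neg (by omega)]

lemma S_mem : (jordanS n) ∈ toeplitzUpper n := by
  simpa using Spow_mem (n := n) 1

lemma zero_mem : (0 : Mn n) ∈ toeplitzUpper n := by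
  constructor <;> intros <;> simp

lemma one_mem : (1 : Mn n) ∈ toeplitzUpper n := by
  simpa using Spow_mem (n := n) 0

lemma add_mem {A B : Mn n} (hA : A ∈ toeplitzUpper n) (hB : B ∈ toeplitzUpper n) :
    A + B ∈ toeplitzUpper n := by
  constructor
  · intro i j h; simp [Matrix.add_apply, hA.1 i j h, hB.1 i j h]
  · intro i j i' j' h; simp [Matrix.add_apply, hA.2 i j i' j' h, hB.2 i j i' j' h]

lemma smul_mem (c : ℂ) {A : Mn n} (hA : A ∈ toeplitzUpper n) :
    c • A ∈ toeplitzUpper n := by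
  constructor
  · intro i j h; simp [Matrix.smul_apply, hA.1 i j h]
  · intro i j i' j' h; simp [Matrix.smul_apply, hA.2 i j i' j' h]

lemma neg_mem {A : Mn n} (hA : A ∈ toeplitzUpper n) : -A ∈ toeplitzUpper n := by
  have := smul_mem (-1) hA; simpa using this

lemma sub_mem {A B : Mn n} (hA : A ∈ toeplitzUpper n) (hB : B ∈ toeplitzUpper n) :
    A - B ∈ toeplitzUpper n := by
  rw [sub_eq_add_neg]; exact add_mem hA (neg_mem hB)

lemma sum_mem {ι : Type*} (s : Finset ι) (f : ι → Mn n)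
    (hf : ∀ i ∈ s, f i ∈ toeplitzUpper n) : (∑ i ∈ s, f i) ∈ toeplitzUpper n := by
  classical
  induction s using Finset.induction with
  | empty => simpa using zero_mem
  | @insert a s ha ih =>
    rw [Finset.sum_insert ha]
    exact add_mem (hf a (Finset.mem_insert_self a s))
      (ih (fun i hi => hf i (Finset.mem_insert_of_mem hi)))

lemma repr {A : Mn n} (hA : A ∈ toeplitzUpper n) :
    A = ∑ k ∈ Finset.range n, coef A k • jordanS n ^ k := by
  ext i j
  rw [Matrix.sum_apply]
  simp only [Matrix.smul_apply, jordanS_pow_apply, smul_eq_mul]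
  by_cases hij : (i : ℕ) ≤ (j : ℕ)
  · have hjilt : (j : ℕ) - (i : ℕ) < n := by omega
    rw [Finset.sum_eq_single ((j:ℕ) - (i:ℕ))]
    · rw [if_pos (by omega), mul_one]
      unfold coef
      rw [dif_pos hjilt]
      exact hA.2 i j _ _ (by push_cast; omega)
    · intro b _ hb
      rw [if_neg (by omega), mul_zero]
    · intro h
      exact absurd (Finset.mem_range.mpr hjilt) h
  · rw [hA.1 i j (by omega)]
    symm
    apply Finset.sum_eq_zero
    intro b _
    rw [if_neg (by omega), mul_zero]

lemma ext_coef {A B : Mn n} (hA : A ∈ toeplitzUpper n) (hB : B ∈ toeplitzUpper n)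
    (h : ∀ k, coef A k = coef B k) : A = B := by
  rw [repr hA, repr hB]
  exact Finset.sum_congr rfl (fun k _ => by rw [h k])

lemma mul_repr {A B : Mn n} (hA : A ∈ toeplitzUpper n) (hB : B ∈ toeplitzUpper n) :
    A * B = ∑ k ∈ Finset.range n, ∑ l ∈ Finset.range n,
      (coef A k * coef B l) • jordanS n ^ (k + l) := by
  conv_lhs => rw [repr hA, repr hB]
  rw [Finset.sum_mul_sum]
  exact Finset.sum_congr rfl fun k _ => Finset.sum_congr rfl fun l _ => by
    rw [smul_mul_smul_comm, pow_add]

lemma mul_mem {A B : Mn n} (hA : A ∈ toeplitzUpper n) (hB : B ∈ toeplitzUpper n) :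
    A * B ∈ toeplitzUpper n := by
  rw [mul_repr hA hB]
  exact sum_mem _ _ fun k _ => sum_mem _ _ fun l _ => smul_mem _ (Spow_mem _)

lemma mul_comm_mem {A B : Mn n} (hA : A ∈ toeplitzUpper n) (hB : B ∈ toeplitzUpper n) :
    A * B = B * A := by
  rw [mul_repr hA hB, mul_repr hB hA, Finset.sum_comm]
  exact Finset.sum_congr rfl fun k _ => Finset.sum_congr rfl fun l _ => by
    rw [mul_comm (coef B k) (coef A l), add_comm k l]

lemma pow_mem {A : Mn n} (hA : A ∈ toeplitzUpper n) (m : ℕ) : A ^ m ∈ toeplitzUpper n := by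
  induction m with
  | zero => simpa using one_mem
  | succ m ih => rw [pow_succ]; exact mul_mem ih hA

/-! ### the filtration `J j = S^j * 𝒜` -/

def J (n j : ℕ) : Set (Mn n) :=
  {X | ∃ B ∈ toeplitzUpper n, X = jordanS n ^ j * B}

lemma J_subset (j : ℕ) : J n j ⊆ toeplitzUpper n := by
  rintro X ⟨B, hB, rfl⟩
  exact mul_mem (Spow_mem j) hB

lemma mem_J_zero {X : Mn n} (hX : X ∈ toeplitzUpper n) : X ∈ J n 0 :=
  ⟨X, hX, by rw [pow_zero, one_mul]⟩

lemma J_mono {j j' : ℕ} (h : j' ≤ j) : J n j ⊆ J n j' := by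
  rintro X ⟨B, hB, rfl⟩
  refine ⟨jordanS n ^ (j - j') * B, mul_mem (Spow_mem _) hB, ?_⟩
  rw [← mul_assoc, ← pow_add]
  congr 2
  omega

lemma J_zero_mem (j : ℕ) : (0 : Mn n) ∈ J n j :=
  ⟨0, zero_mem, by rw [mul_zero]⟩

lemma J_add {X Y : Mn n} {j : ℕ} (hX : X ∈ J n j) (hY : Y ∈ J n j) : X + Y ∈ J n j := by
  obtain ⟨B, hB, rfl⟩ := hX
  obtain ⟨C, hC, rfl⟩ := hY
  exact ⟨B + C, add_mem hB hC, by rw [mul_add]⟩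

lemma J_smul (c : ℂ) {X : Mn n} {j : ℕ} (hX : X ∈ J n j) : c • X ∈ J n j := by
  obtain ⟨B, hB, rfl⟩ := hX
  exact ⟨c • B, smul_mem c hB, by rw [Matrix.mul_smul]⟩

lemma J_neg {X : Mn n} {j : ℕ} (hX : X ∈ J n j) : -X ∈ J n j := by
  have := J_smul (-1) hX; simpa using this

lemma J_sub {X Y : Mn n} {j : ℕ} (hX : X ∈ J n j) (hY : Y ∈ J n j) : X - Y ∈ J n j := by
  rw [sub_eq_add_neg]; exact J_add hX (J_neg hY)

lemma J_sum {ι : Type*} (s : Finset ι) (f : ι → Mn n) {j : ℕ}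
    (hf : ∀ i ∈ s, f i ∈ J n j) : (∑ i ∈ s, f i) ∈ J n j := by
  classical
  induction s using Finset.induction with
  | empty => simpa using J_zero_mem j
  | @insert a s ha ih =>
    rw [Finset.sum_insert ha]
    exact J_add (hf a (Finset.mem_insert_self a s))
      (ih (fun i hi => hf i (Finset.mem_insert_of_mem hi)))

lemma J_mul {X Y : Mn n} {a b : ℕ} (hX : X ∈ J n a) (hY : Y ∈ J n b) :
    X * Y ∈ J n (a + b) := by
  obtain ⟨B, hB, rfl⟩ := hX
  obtain ⟨C, hC, rfl⟩ := hY
  refine ⟨B * C, mul_mem hB hC, ?_⟩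
  rw [pow_add]
  rw [mul_assoc, mul_assoc, ← mul_assoc B, mul_comm_mem hB (Spow_mem b), mul_assoc]

lemma J_mul_left {X B : Mn n} {a : ℕ} (hB : B ∈ toeplitzUpper n) (hX : X ∈ J n a) :
    B * X ∈ J n a := by
  have := J_mul (mem_J_zero hB) hX
  simpa using this

lemma J_mul_right {X B : Mn n} {a : ℕ} (hX : X ∈ J n a) (hB : B ∈ toeplitzUpper n) :
    X * B ∈ J n a := by
  have := J_mul hX (mem_J_zero hB)
  simpa using this

lemma J_pow {X : Mn n} {a : ℕ} (hX : X ∈ J n a) (m : ℕ) : X ^ m ∈ J n (a * m) := by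
  induction m with
  | zero => simpa using mem_J_zero one_mem
  | succ m ih =>
    rw [pow_succ]
    have := J_mul ih hX
    rw [show a * m + a = a * (m + 1) by ring] at this
    exact this

lemma J_top {X : Mn n} (hX : X ∈ J n n) : X = 0 := by
  obtain ⟨B, hB, rfl⟩ := hX
  rw [jordanS_pow_zero_of_le (le_refl n), zero_mul]

lemma eq_zero_of_J {X : Mn n} {j : ℕ} (hj : n ≤ j) (hX : X ∈ J n j) : X = 0 :=
  J_top (J_mono hj hX)

lemma coef_J {X : Mn n} {j k : ℕ} (hX : X ∈ J n j) (hk : k < j) : coef X k = 0 := by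
  obtain ⟨B, hB, rfl⟩ := hX
  unfold coef
  split
  · rename_i hkn
    rw [Matrix.mul_apply]
    apply Finset.sum_eq_zero
    intro l _
    rw [jordanS_pow_apply]
    by_cases hl : (0 : ℕ) + j = (l : ℕ)
    · rw [if_pos hl, one_mul]
      exact hB.1 l _ (by simpa using (by omega : (k : ℕ) < (l : ℕ)))
    · rw [if_neg hl, zero_mul]
  · rfl

lemma coef_Spow_mul {B : Mn n} (hB : B ∈ toeplitzUpper n) {j : ℕ} (hj : j < n) :
    coef (jordanS n ^ j * B) j = coef B 0 := by
  have h0 : (0 : ℕ) < n := by omega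
  unfold coef
  rw [dif_pos hj, dif_pos h0, Matrix.mul_apply]
  rw [Finset.sum_eq_single (⟨j, hj⟩ : Fin n)]
  · rw [jordanS_pow_apply, if_pos (by simp), one_mul]
    exact hB.2 _ _ _ _ (by push_cast; omega)
  · intro b _ hb
    rw [jordanS_pow_apply, if_neg (by simpa using fun hh => hb (Fin.ext hh.symm)), zero_mul]
  · intro h; exact absurd (Finset.mem_univ _) h

lemma mem_J_one {X : Mn n} (hX : X ∈ toeplitzUpper n) (h0 : coef X 0 = 0) : X ∈ J n 1 := by
  rcases Nat.eq_zero_or_pos n with hn | hn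
  · subst hn
    exact ⟨0, zero_mem, Subsingleton.elim _ _⟩
  refine ⟨∑ k ∈ Finset.range n, coef X (k + 1) • jordanS n ^ k,
    sum_mem _ _ (fun k _ => smul_mem _ (Spow_mem k)), ?_⟩
  rw [Finset.mul_sum]
  simp_rw [Matrix.mul_smul, pow_one, ← pow_succ']
  conv_lhs => rw [repr hX]
  obtain ⟨m, rfl⟩ : ∃ m, n = m + 1 := ⟨n - 1, by omega⟩
  rw [Finset.sum_range_succ' (fun k => coef X k • jordanS (m+1) ^ k) m,
    Finset.sum_range_succ (fun k => coef X (k+1) • jordanS (m+1) ^ (k+1)) m]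
  rw [h0, zero_smul, add_zero, jordanS_pow_zero_of_le (le_refl (m+1)), smul_zero, add_zero]

lemma J_decomp {X : Mn n} {j : ℕ} (hX : X ∈ J n j) :
    X - coef X j • jordanS n ^ j ∈ J n (j + 1) := by
  by_cases hj : j < n
  · obtain ⟨B, hB, rfl⟩ := hX
    rw [coef_Spow_mul hB hj]
    have hB1 : B - coef B 0 • 1 ∈ J n 1 := by
      apply mem_J_one (sub_mem hB (smul_mem _ one_mem))
      rw [coef_sub, coef_smul, coef_one (by omega), if_pos rfl, mul_one, sub_self]
    obtain ⟨C, hC, hCeq⟩ := hB1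
    refine ⟨C, hC, ?_⟩
    have key : jordanS n ^ j * (B - coef B 0 • 1) = jordanS n ^ (j + 1) * C := by
      rw [hCeq, pow_one, ← mul_assoc, ← pow_succ]
    rw [mul_sub, Matrix.mul_smul, mul_one] at key
    exact key
  · have hX0 : X = 0 := eq_zero_of_J (by omega) hX
    subst hX0
    rw [coef_zero, zero_smul, sub_zero]
    exact J_zero_mem _

lemma mem_J_of_coef {X : Mn n} (hX : X ∈ toeplitzUpper n) (j : ℕ)
    (h : ∀ k < j, coef X k = 0) : X ∈ J n j := by
  induction j with
  | zero => exact mem_J_zero hX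
  | succ j ih =>
    have hXj : X ∈ J n j := ih (fun k hk => h k (by omega))
    have := J_decomp hXj
    rwa [h j (by omega), zero_smul, sub_zero] at this

lemma Mn_zero_eq (hn : n = 0) (A B : Mn n) : A = B := by
  subst hn; ext i; exact i.elim0

/-! ### exponential -/

def expo (X : Mn n) : Mn n := NormedSpace.exp X

lemma expo_eq_sum {X : Mn n} (hX : X ∈ J n 1) :
    expo X = ∑ m ∈ Finset.range n, ((Nat.factorial m : ℕ) : ℂ)⁻¹ • X ^ m := by
  rw [expo, NormedSpace.exp_eq_tsum ℂ]
  refine tsum_eq_sum ?_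
  intro m hm
  have hnm : n ≤ m := le_of_not_gt (fun h => hm (Finset.mem_range.mpr h))
  have : X ^ m = 0 := eq_zero_of_J hnm (by simpa using J_pow hX m)
  rw [this, smul_zero]

lemma expo_zero : expo (0 : Mn n) = 1 := NormedSpace.exp_zero

lemma expo_mem {X : Mn n} (hX : X ∈ J n 1) : expo X ∈ toeplitzUpper n := by
  rw [expo_eq_sum hX]
  exact sum_mem _ _ fun m _ => smul_mem _ (pow_mem (J_subset 1 hX) m)

lemma coef_expo_zero (hn : 0 < n) {X : Mn n} (hX : X ∈ J n 1) : coef (expo X) 0 = 1 := by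
  rw [expo_eq_sum hX, coef_sum]
  rw [Finset.sum_eq_single 0]
  · rw [coef_smul, pow_zero, coef_one hn, if_pos rfl]
    simp
  · intro m _ hm
    rw [coef_smul, coef_J (by simpa using J_pow hX m) (by omega), mul_zero]
  · intro h; exact absurd (Finset.mem_range.mpr hn) h

lemma expo_add {X Y : Mn n} (hX : X ∈ J n 1) (hY : Y ∈ J n 1) :
    expo (X + Y) = expo X * expo Y :=
  NormedSpace.exp_add_of_commute_of_mem_ball (𝕂 := ℂ) (mul_comm_mem (J_subset 1 hX) (J_subset 1 hY))
    ((NormedSpace.expSeries_radius_eq_top ℂ (Mn n)).symm ▸ edist_lt_top _ _)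
    ((NormedSpace.expSeries_radius_eq_top ℂ (Mn n)).symm ▸ edist_lt_top _ _)

lemma expo_sub_J {X : Mn n} {k : ℕ} (hk : 1 ≤ k) (hX : X ∈ J n k) :
    expo X - 1 - X ∈ J n (2 * k) := by
  have hX1 : X ∈ J n 1 := J_mono hk hX
  rcases Nat.lt_or_ge n 2 with hn | hn
  · rcases Nat.lt_or_ge n 1 with hn0 | hn1
    · exact ⟨0, zero_mem, Mn_zero_eq (by omega) _ _⟩
    · have hX0 : X = 0 := eq_zero_of_J (by omega) hX1
      rw [hX0, expo_zero, sub_self, sub_zero]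
      exact J_zero_mem _
  · have hEq : (∑ m ∈ Finset.range n, ((Nat.factorial m : ℕ) : ℂ)⁻¹ • X ^ m) - 1 - X
        = ∑ m ∈ Finset.Ico 2 n, ((Nat.factorial m : ℕ) : ℂ)⁻¹ • X ^ m := by
      rw [Finset.range_eq_Ico, Finset.sum_eq_sum_Ico_succ_bot (by omega),
        Finset.sum_eq_sum_Ico_succ_bot (by omega)]
      simp only [pow_zero, pow_one, Nat.factorial_zero, Nat.factorial_one, Nat.zero_add,
        zero_add, Nat.cast_one, inv_one, one_smul]
      abel
    rw [expo_eq_sum hX1, hEq]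
    apply J_sum
    intro m hm
    have hm2 : 2 ≤ m := (Finset.mem_Ico.mp hm).1
    apply J_smul
    exact J_mono (by nlinarith) (J_pow hX m)

lemma expo_approx {X Y : Mn n} {k : ℕ} (hk : 1 ≤ k) (hX : X ∈ J n 1) (hY : Y ∈ J n 1)
    (hD : X - Y ∈ J n k) :
    expo X - expo Y - (X - Y) ∈ J n (k + 1) := by
  have hD1 : X - Y ∈ J n 1 := J_mono hk hD
  have hXeq : X = Y + (X - Y) := by abel
  have hexp : expo X = expo Y * expo (X - Y) := by
    conv_lhs => rw [hXeq]
    exact expo_add hY hD1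
  have hE : expo (X - Y) - 1 - (X - Y) ∈ J n (2 * k) := expo_sub_J hk hD
  have key : expo X - expo Y - (X - Y)
      = (expo Y - 1) * (X - Y) + expo Y * (expo (X - Y) - 1 - (X - Y)) := by
    rw [hexp]; noncomm_ring
  rw [key]
  apply J_add
  · have h1 : expo Y - 1 ∈ J n 1 := by
      rcases Nat.eq_zero_or_pos n with hn | hn
      · rw [Mn_zero_eq (by omega) (expo Y - 1) 0]
        exact J_zero_mem 1
      apply mem_J_one (sub_mem (expo_mem hY) one_mem)
      rw [coef_sub, coef_expo_zero hn hY, coef_one hn, if_pos rfl, sub_self]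
    have := J_mul h1 hD
    rwa [add_comm 1 k] at this
  · exact J_mono (by omega) (J_mul_left (expo_mem hY) hE)

lemma expo_inj {X Y : Mn n} (hX : X ∈ J n 1) (hY : Y ∈ J n 1)
    (h : expo X = expo Y) : X = Y := by
  have key : ∀ k, X - Y ∈ J n k := by
    intro k
    induction k with
    | zero => exact mem_J_zero (sub_mem (J_subset 1 hX) (J_subset 1 hY))
    | succ k ih =>
      rcases Nat.eq_zero_or_pos k with rfl | hk
      · apply mem_J_one (sub_mem (J_subset 1 hX) (J_subset 1 hY))
        rw [coef_sub, coef_J hX (by omega), coef_J hY (by omega), sub_self]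
      · have := expo_approx hk hX hY ih
        rw [h, sub_self, zero_sub] at this
        have := J_neg this
        rwa [neg_neg] at this
  have := J_top (key n)
  rwa [sub_eq_zero] at this

lemma Spow_mem_J (k : ℕ) : (jordanS n ^ k) ∈ J n k :=
  ⟨1, one_mem, (mul_one _).symm⟩

lemma expo_surj (hn : 0 < n) {u : Mn n} (hu : u ∈ toeplitzUpper n) (hu0 : coef u 0 = 1) :
    ∃ N ∈ J n 1, expo N = u := by
  have aux : ∀ k, 1 ≤ k → ∃ N ∈ J n 1, expo N - u ∈ J n k := by
    intro k hk
    induction k, hk using Nat.le_induction with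
    | base =>
      refine ⟨0, J_zero_mem 1, ?_⟩
      apply mem_J_one (sub_mem (expo_zero (n := n) ▸ one_mem) hu)
      rw [expo_zero, coef_sub, coef_one hn, if_pos rfl, hu0, sub_self]
    | succ k hk ih =>
      obtain ⟨N, hN, hNk⟩ := ih
      set c := coef (expo N - u) k with hc
      refine ⟨N + (-c) • jordanS n ^ k, J_add hN (J_smul _ (J_mono hk (Spow_mem_J k))), ?_⟩
      set N' := N + (-c) • jordanS n ^ k with hN'def
      have hN' : N' ∈ J n 1 := J_add hN (J_smul _ (J_mono hk (Spow_mem_J k)))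
      have hDeq : N' - N = (-c) • jordanS n ^ k := by rw [hN'def]; abel
      have hD : N' - N ∈ J n k := hDeq ▸ J_smul _ (Spow_mem_J k)
      have hW := expo_approx hk hN' hN hD
      have hP := J_decomp hNk
      rw [← hc] at hP
      have key : expo N' - u = (expo N - u - c • jordanS n ^ k)
          + (expo N' - expo N - (N' - N)) := by
        rw [hDeq, neg_smul]; abel
      rw [key]
      exact J_add hP hW
  obtain ⟨N, hN, hNn⟩ := aux n (by omega)
  have h0 : expo N - u = 0 := J_top hNn
  exact ⟨N, hN, by rwa [sub_eq_zero] at h0⟩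

/-! ### the logarithm of `1 + tS` and its exponential -/

lemma sum_shift {M : Type*} [AddCommGroup M] (m : ℕ) (f : ℕ → M) (hf : f m = 0) :
    ∑ k ∈ Finset.range m, f (k + 1) = (∑ k ∈ Finset.range m, f k) - f 0 := by
  have h1 := Finset.sum_range_succ' f m
  rw [Finset.sum_range_succ f m, hf, add_zero] at h1
  rw [h1, add_sub_cancel_right]

def Lc (k : ℕ) : ℂ := (-1) ^ (k + 1) / k

lemma Lc_zero : Lc 0 = 0 := by simp [Lc]

lemma Lc_mul_self (k : ℕ) (hk : 1 ≤ k) : Lc k * k = (-1) ^ (k + 1) := by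
  have : (k : ℂ) ≠ 0 := Nat.cast_ne_zero.mpr (by omega)
  rw [Lc, div_mul_cancel₀ _ this]

def Lt (n : ℕ) (t : ℂ) : Mn n := ∑ k ∈ Finset.range n, (Lc k * t ^ k) • jordanS n ^ k

def Qt (n : ℕ) (t : ℂ) : Mn n := ∑ k ∈ Finset.range n, ((-t) ^ k) • jordanS n ^ k

lemma Lt_mem_J1 (t : ℂ) : Lt n t ∈ J n 1 := by
  apply J_sum
  intro k _
  cases k with
  | zero => rw [Lc_zero, zero_mul, zero_smul]; exact J_zero_mem 1
  | succ k => exact J_smul _ (J_mono (by omega) (Spow_mem_J (k + 1)))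

lemma Lt_mem (t : ℂ) : Lt n t ∈ toeplitzUpper n := J_subset 1 (Lt_mem_J1 t)

lemma Qt_mem (t : ℂ) : Qt n t ∈ toeplitzUpper n :=
  sum_mem _ _ fun k _ => smul_mem _ (Spow_mem k)

lemma one_add_smul_mem (t : ℂ) : (1 : Mn n) + t • jordanS n ∈ toeplitzUpper n :=
  add_mem one_mem (smul_mem t S_mem)

lemma S_mul_Qt (t : ℂ) :
    jordanS n * Qt n t = ∑ k ∈ Finset.range n, ((-t) ^ k) • jordanS n ^ (k + 1) := by
  rw [Qt, Finset.mul_sum]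
  exact Finset.sum_congr rfl fun k _ => by rw [mul_smul_comm, ← pow_succ']

lemma Qt_identity (t : ℂ) : ((1 : Mn n) + t • jordanS n) * Qt n t = 1 := by
  rcases Nat.eq_zero_or_pos n with hn | hn
  · exact Mn_zero_eq hn _ _
  have expand : ((1 : Mn n) + t • jordanS n) * Qt n t
      = Qt n t + t • (jordanS n * Qt n t) := by
    rw [add_mul, one_mul, smul_mul_assoc]
  rw [expand, S_mul_Qt, Finset.smul_sum]
  have hterm : ∀ k : ℕ, t • (((-t) ^ k) • jordanS n ^ (k+1))
      = -(((-t) ^ (k+1)) • jordanS n ^ (k+1)) := by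
    intro k
    rw [smul_smul, ← neg_smul]
    congr 1
    rw [pow_succ]
    ring
  rw [Finset.sum_congr rfl (fun k _ => hterm k), Finset.sum_neg_distrib]
  rw [sum_shift n (fun k => ((-t) ^ k) • jordanS n ^ k)
    (by simp [jordanS_pow_zero_of_le (le_refl n)])]
  rw [pow_zero, pow_zero, one_smul]
  have : Qt n t = ∑ k ∈ Finset.range n, ((-t) ^ k) • jordanS n ^ k := rfl
  rw [← this]
  abel

def Kt (n : ℕ) (t : ℂ) : Mn n :=
  ∑ k ∈ Finset.range n, ((k : ℂ) * (-1) ^ k * t ^ (k - 1)) • jordanS n ^ k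

lemma Kt_identity (t : ℂ) :
    ((1 : Mn n) + t • jordanS n) * Kt n t + jordanS n * Qt n t = 0 := by
  have expand : ((1 : Mn n) + t • jordanS n) * Kt n t
      = Kt n t + t • (jordanS n * Kt n t) := by
    rw [add_mul, one_mul, smul_mul_assoc]
  have hSK : jordanS n * Kt n t
      = ∑ k ∈ Finset.range n, ((k : ℂ) * (-1) ^ k * t ^ (k - 1)) • jordanS n ^ (k + 1) := by
    rw [Kt, Finset.mul_sum]
    exact Finset.sum_congr rfl fun k _ => by rw [mul_smul_comm, ← pow_succ']
  rw [expand, hSK, S_mul_Qt, Finset.smul_sum]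
  have hcomb : ∀ k : ℕ, t • (((k : ℂ) * (-1) ^ k * t ^ (k - 1)) • jordanS n ^ (k + 1))
      + ((-t) ^ k) • jordanS n ^ (k + 1)
      = -(((((k+1) : ℕ) : ℂ) * (-1) ^ (k+1) * t ^ ((k+1) - 1)) • jordanS n ^ (k + 1)) := by
    intro k
    rw [smul_smul, ← add_smul, ← neg_smul]
    congr 1
    cases k with
    | zero => simp
    | succ m =>
      have h1 : (m + 1 : ℕ) - 1 = m := by omega
      have h2 : (m + 1 + 1 : ℕ) - 1 = m + 1 := by omega
      rw [h1, h2, neg_pow t (m+1)]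
      push_cast
      ring
  have final : Kt n t + (∑ k ∈ Finset.range n,
        t • (((k : ℂ) * (-1) ^ k * t ^ (k - 1)) • jordanS n ^ (k + 1))
      + ∑ k ∈ Finset.range n, ((-t) ^ k) • jordanS n ^ (k + 1)) = 0 := by
    rw [← Finset.sum_add_distrib, Finset.sum_congr rfl (fun k _ => hcomb k),
      Finset.sum_neg_distrib]
    rw [sum_shift n (fun k => (((k : ℕ) : ℂ) * (-1) ^ k * t ^ (k - 1)) • jordanS n ^ k)
      (by simp [jordanS_pow_zero_of_le (le_refl n)])]
    have h0 : (((0 : ℕ) : ℂ) * (-1) ^ 0 * t ^ (0 - 1)) • jordanS n ^ 0 = 0 := by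
      norm_num
    have : Kt n t = ∑ k ∈ Finset.range n,
        (((k : ℕ) : ℂ) * (-1) ^ k * t ^ (k - 1)) • jordanS n ^ k := rfl
    rw [this, h0]
    abel
  rw [add_assoc]
  exact final

/-! ### derivative computations -/

lemma Qt_hasDerivAt (t : ℂ) : HasDerivAt (Qt n) (Kt n t) t := by
  have : ∀ k ∈ Finset.range n, HasDerivAt (fun s : ℂ => ((-s) ^ k) • jordanS n ^ k)
      (((k : ℂ) * (-1) ^ k * t ^ (k - 1)) • jordanS n ^ k) t := by
    intro k _
    have h1 : ∀ s : ℂ, ((-s) ^ k) • jordanS n ^ k = ((-1) ^ k * s ^ k) • jordanS n ^ k := by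
      intro s; rw [neg_pow]
    simp_rw [h1]
    have := ((hasDerivAt_pow k t).const_mul ((-1 : ℂ) ^ k)).smul_const (jordanS n ^ k)
    rw [show (k : ℂ) * (-1) ^ k * t ^ (k - 1) = (-1) ^ k * ((k : ℂ) * t ^ (k - 1)) by ring]
    exact this
  have hsum := HasDerivAt.fun_sum this
  exact hsum

lemma Lt_hasDerivAt (t : ℂ) : HasDerivAt (Lt n) (jordanS n * Qt n t) t := by
  have hterm : ∀ k ∈ Finset.range n, HasDerivAt (fun s : ℂ => (Lc k * s ^ k) • jordanS n ^ k)
      ((Lc k * ((k : ℂ) * t ^ (k - 1))) • jordanS n ^ k) t := by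
    intro k _
    exact ((hasDerivAt_pow k t).const_mul (Lc k)).smul_const (jordanS n ^ k)
  have hsum := HasDerivAt.fun_sum hterm
  have hident : ∑ k ∈ Finset.range n, (Lc k * ((k : ℂ) * t ^ (k - 1))) • jordanS n ^ k
      = jordanS n * Qt n t := by
    rw [S_mul_Qt]
    have hshift := sum_shift n (fun k => (Lc k * ((k : ℂ) * t ^ (k - 1))) • jordanS n ^ k)
      (by simp [jordanS_pow_zero_of_le (le_refl n)])
    beta_reduce at hshift
    have hf0 : (Lc 0 * ((0 : ℕ) * t ^ (0 - 1))) • jordanS n ^ 0 = (0 : Mn n) := by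
      simp [Lc_zero]
    rw [hf0, sub_zero] at hshift
    rw [← hshift]
    apply Finset.sum_congr rfl
    intro k _
    have hlc := Lc_mul_self (k + 1) (by omega)
    have hidx : (k + 1) - 1 = k := by omega
    rw [hidx]
    congr 1
    rw [neg_pow, ← mul_assoc, hlc, pow_succ, pow_succ]
    ring
  exact hident ▸ hsum


lemma SQ_mem (t : ℂ) : jordanS n * Qt n t ∈ toeplitzUpper n := mul_mem S_mem (Qt_mem t)

lemma SQ_mem_J1 (t : ℂ) : jordanS n * Qt n t ∈ J n 1 := by
  have h1 : jordanS n ∈ J n 1 := by simpa using Spow_mem_J (n := n) 1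
  exact J_mul_right h1 (Qt_mem t)

lemma Lt_pow_hasDerivAt (t : ℂ) (m : ℕ) :
    HasDerivAt (fun s => (Lt n s) ^ m)
      ((m : ℂ) • ((Lt n t) ^ (m - 1) * (jordanS n * Qt n t))) t := by
  induction m with
  | zero =>
    simp only [pow_zero, Nat.cast_zero, zero_smul]
    exact hasDerivAt_const t 1
  | succ m ih =>
    have h := (Lt_hasDerivAt t).fun_mul ih
    have hfun : (fun s => Lt n s * Lt n s ^ m) = fun s => (Lt n s) ^ (m + 1) := by
      funext s; rw [← pow_succ']
    rw [hfun] at h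
    convert h using 1
    · rfl
    · rfl
    · rfl
    cases m with
    | zero => simp
    | succ m =>
      have hc1 : jordanS n * Qt n t * Lt n t ^ (m + 1)
          = Lt n t ^ (m + 1) * (jordanS n * Qt n t) :=
        mul_comm_mem (SQ_mem t) (pow_mem (Lt_mem t) (m + 1))
      have hc2 : Lt n t * (((m + 1 : ℕ) : ℂ) • (Lt n t ^ (m + 1 - 1) * (jordanS n * Qt n t)))
          = ((m + 1 : ℕ) : ℂ) • (Lt n t ^ (m + 1) * (jordanS n * Qt n t)) := by
        rw [mul_smul_comm]
        congr 1
        rw [← mul_assoc]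
        congr 1
        have : m + 1 - 1 = m := by omega
        rw [this, ← pow_succ']
      rw [hc1, hc2]
      have h3 : m + 1 + 1 - 1 = m + 1 := by omega
      rw [h3, show ((m + 1 + 1 : ℕ) : ℂ) = 1 + ((m + 1 : ℕ) : ℂ) by push_cast; ring,
        add_smul, one_smul]

def Ft (n : ℕ) (t : ℂ) : Mn n :=
  ∑ m ∈ Finset.range n, ((Nat.factorial m : ℕ) : ℂ)⁻¹ • (Lt n t) ^ m

lemma Ft_mem (t : ℂ) : Ft n t ∈ toeplitzUpper n :=
  sum_mem _ _ fun m _ => smul_mem _ (pow_mem (Lt_mem t) m)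

lemma Ft_hasDerivAt (t : ℂ) :
    HasDerivAt (Ft n) (Ft n t * (jordanS n * Qt n t)) t := by
  have hterm : ∀ m ∈ Finset.range n,
      HasDerivAt (fun s => ((Nat.factorial m : ℕ) : ℂ)⁻¹ • (Lt n s) ^ m)
        ((((Nat.factorial m : ℕ) : ℂ)⁻¹ * m) • ((Lt n t) ^ (m - 1) * (jordanS n * Qt n t))) t := by
    intro m _
    have := (Lt_pow_hasDerivAt (n := n) t m).const_smul (((Nat.factorial m : ℕ) : ℂ)⁻¹)
    rwa [smul_smul] at this
  have hsum := HasDerivAt.fun_sum hterm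
  have hident : ∑ m ∈ Finset.range n,
      ((((Nat.factorial m : ℕ) : ℂ)⁻¹ * m) • ((Lt n t) ^ (m - 1) * (jordanS n * Qt n t)))
      = Ft n t * (jordanS n * Qt n t) := by
    have hRHS : Ft n t * (jordanS n * Qt n t)
        = ∑ m ∈ Finset.range n,
          ((Nat.factorial m : ℕ) : ℂ)⁻¹ • ((Lt n t) ^ m * (jordanS n * Qt n t)) := by
      rw [Ft, Finset.sum_mul]
      exact Finset.sum_congr rfl fun m _ => by rw [smul_mul_assoc]
    rw [hRHS]
    have hshift := sum_shift n
      (fun m => ((((Nat.factorial m : ℕ) : ℂ)⁻¹ * m) • ((Lt n t) ^ (m - 1) * (jordanS n * Qt n t))))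
      (by
        have hzero : (Lt n t) ^ (n - 1) * (jordanS n * Qt n t) = 0 := by
          apply J_top
          have h1 : (Lt n t) ^ (n - 1) ∈ J n (n - 1) := by
            have := J_pow (Lt_mem_J1 (n := n) t) (n - 1)
            rwa [one_mul] at this
          have h2 := J_mul h1 (SQ_mem_J1 t)
          rcases Nat.eq_zero_or_pos n with hn | hn
          · rw [Mn_zero_eq hn ((Lt n t) ^ (n - 1) * (jordanS n * Qt n t)) 0]
            exact J_zero_mem n
          · have : n - 1 + 1 = n := by omega
            rwa [this] at h2
        beta_reduce
        rw [hzero, smul_zero])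
    beta_reduce at hshift
    have hz : ((((Nat.factorial 0 : ℕ) : ℂ)⁻¹ * (0 : ℕ)) •
        ((Lt n t) ^ (0 - 1) * (jordanS n * Qt n t))) = 0 := by
      simp
    rw [hz, sub_zero] at hshift
    rw [← hshift]
    apply Finset.sum_congr rfl
    intro m _
    have hidx : m + 1 - 1 = m := by omega
    rw [hidx]
    congr 1
    rw [Nat.factorial_succ]
    push_cast
    have hm : ((Nat.factorial m : ℕ) : ℂ) ≠ 0 := Nat.cast_ne_zero.mpr (Nat.factorial_ne_zero m)
    have hm1 : ((m : ℂ) + 1) ≠ 0 := by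
      intro hcon
      have : ((m : ℂ) + 1) = ((m + 1 : ℕ) : ℂ) := by push_cast; ring
      rw [this] at hcon
      exact Nat.cast_ne_zero.mpr (by omega) hcon
    field_simp
  exact hident ▸ hsum

lemma G_hasDerivAt (t : ℂ) : HasDerivAt (fun s => Ft n s * Qt n s) 0 t := by
  have h := (Ft_hasDerivAt (n := n) t).mul (Qt_hasDerivAt (n := n) t)
  have hK : Kt n t = -(Qt n t * (jordanS n * Qt n t)) := by
    have h1 := Kt_identity (n := n) t
    have h2 := congrArg (fun X => Qt n t * X) h1
    simp only [mul_add, mul_zero] at h2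
    rw [← mul_assoc, mul_comm_mem (Qt_mem t) (one_add_smul_mem t), Qt_identity, one_mul] at h2
    exact eq_neg_of_add_eq_zero_left h2
  have hzero : Ft n t * (jordanS n * Qt n t) * Qt n t + Ft n t * Kt n t = 0 := by
    rw [hK, mul_assoc, mul_comm_mem (SQ_mem t) (Qt_mem t), mul_neg, add_neg_cancel]
  exact hzero ▸ h

lemma const_of_hasDerivAt_zero {g : ℂ → Mn n} (hg : ∀ s, HasDerivAt g 0 s) (t : ℂ) :
    g t = g 0 := by
  have key : ∀ s : ℝ, HasDerivAt (fun r : ℝ => g ((r : ℂ) * t)) 0 s := by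
    intro s
    have hu : HasDerivAt (fun r : ℝ => (r : ℂ) * t) t s := by
      simpa using (Complex.ofRealCLM.hasDerivAt (x := s)).mul_const t
    have := (hg ((s : ℂ) * t)).scomp s hu
    rw [smul_zero] at this
    exact this
  have hdiff : Differentiable ℝ (fun r : ℝ => g ((r : ℂ) * t)) :=
    fun s => (key s).differentiableAt
  have hconst := is_const_of_deriv_eq_zero hdiff (fun s => (key s).deriv) 1 0
  simpa using hconst

lemma FQ_eq_one (hn : 0 < n) (t : ℂ) : Ft n t * Qt n t = 1 := by
  have hconst := const_of_hasDerivAt_zero (G_hasDerivAt (n := n)) t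
  have hL0 : Lt n 0 = 0 := by
    rw [Lt]
    apply Finset.sum_eq_zero
    intro k _
    cases k with
    | zero => rw [Lc_zero, zero_mul, zero_smul]
    | succ k => rw [zero_pow (by omega), mul_zero, zero_smul]
  have hF0 : Ft n 0 = 1 := by
    rw [Ft, hL0]
    rw [Finset.sum_eq_single 0]
    · simp
    · intro m _ hm
      rw [zero_pow hm, smul_zero]
    · intro h; exact absurd (Finset.mem_range.mpr hn) h
  have hQ0 : Qt n 0 = 1 := by
    rw [Qt]
    rw [Finset.sum_eq_single 0]
    · simp
    · intro m _ hm
      rw [neg_zero, zero_pow hm, zero_smul]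
    · intro h; exact absurd (Finset.mem_range.mpr hn) h
  rw [hconst, hF0, hQ0, one_mul]

lemma expo_Lt (hn : 0 < n) (t : ℂ) : expo (Lt n t) = 1 + t • jordanS n := by
  have h1 : expo (Lt n t) = Ft n t := expo_eq_sum (Lt_mem_J1 t)
  have h2 : Qt n t * ((1 : Mn n) + t • jordanS n) = 1 := by
    rw [mul_comm_mem (Qt_mem t) (one_add_smul_mem t), Qt_identity]
  calc expo (Lt n t) = Ft n t * 1 := by rw [h1, mul_one]
    _ = Ft n t * (Qt n t * ((1 : Mn n) + t • jordanS n)) := by rw [h2]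
    _ = (Ft n t * Qt n t) * ((1 : Mn n) + t • jordanS n) := by rw [mul_assoc]
    _ = 1 + t • jordanS n := by rw [FQ_eq_one hn t, one_mul]

/-! ### analytic helper lemmas -/

open Filter Topology

lemma inv_nat_tendsto : Tendsto (fun m : ℕ => ((m : ℂ))⁻¹) atTop (𝓝 0) := by
  have h1 : Tendsto (fun m : ℕ => ((m : ℝ))⁻¹) atTop (𝓝 0) :=
    tendsto_inv_atTop_nhds_zero_nat
  have h2 := (Complex.continuous_ofReal.tendsto 0).comp h1
  have h3 : (fun m : ℕ => ((m : ℂ))⁻¹) = (Complex.ofReal ∘ fun m : ℕ => ((m : ℝ))⁻¹) := by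
    funext m; simp
  rw [h3]
  simpa using h2

lemma poly_tendsto_zero (d : ℕ) (c : ℕ → ℂ)
    (h : Tendsto (fun m : ℕ => ∑ k ∈ Finset.range d, c k * (m : ℂ) ^ k) atTop (𝓝 0)) :
    ∀ k < d, c k = 0 := by
  induction d with
  | zero => intro k hk; omega
  | succ d ih =>
    have hne : ∀ᶠ m : ℕ in atTop, ((m : ℂ)) ≠ 0 := by
      filter_upwards [Filter.eventually_ge_atTop 1] with m hm
      exact_mod_cast Nat.cast_ne_zero.mpr (by omega)
    have hterm : ∀ k ∈ Finset.range (d + 1),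
        Tendsto (fun m : ℕ => c k * (m : ℂ) ^ k * (((m : ℂ) ^ d)⁻¹)) atTop
          (𝓝 (if k = d then c d else 0)) := by
      intro k hk
      have hkd : k ≤ d := by simpa using Nat.lt_succ_iff.mp (Finset.mem_range.mp hk)
      by_cases hkd' : k = d
      · subst hkd'
        rw [if_pos rfl]
        apply Tendsto.congr' ?_ tendsto_const_nhds
        filter_upwards [hne] with m hm
        field_simp
      · rw [if_neg hkd']
        have hlt : 1 ≤ d - k := by omega
        have hbase : Tendsto (fun m : ℕ => (((m : ℂ))⁻¹) ^ (d - k)) atTop (𝓝 0) := by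
          have := inv_nat_tendsto.pow (d - k)
          rwa [zero_pow (by omega)] at this
        have := hbase.const_mul (c k)
        rw [mul_zero] at this
        apply Tendsto.congr' ?_ this
        filter_upwards [hne] with m hm
        rw [mul_assoc]
        congr 1
        have hsplit : (m : ℂ) ^ d = (m : ℂ) ^ k * (m : ℂ) ^ (d - k) := by
          rw [← pow_add]; congr 1; omega
        rw [hsplit, mul_inv, ← mul_assoc, mul_inv_cancel₀ (pow_ne_zero _ hm), one_mul, inv_pow]
    have hsum := tendsto_finset_sum (Finset.range (d + 1)) hterm
    have hlim : (∑ k ∈ Finset.range (d + 1), if k = d then c d else 0) = c d := by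
      rw [Finset.sum_eq_single d (fun k _ hk => if_neg hk)
        (fun hd => absurd (Finset.self_mem_range_succ d) hd), if_pos rfl]
    rw [hlim] at hsum
    have hmul : Tendsto (fun m : ℕ =>
        (∑ k ∈ Finset.range (d + 1), c k * (m : ℂ) ^ k) * (((m : ℂ) ^ d)⁻¹)) atTop (𝓝 (c d)) := by
      apply Tendsto.congr' ?_ hsum
      filter_upwards with m
      rw [Finset.sum_mul]
    have hbdd : Tendsto (fun m : ℕ =>
        (∑ k ∈ Finset.range (d + 1), c k * (m : ℂ) ^ k) * (((m : ℂ) ^ d)⁻¹)) atTop (𝓝 0) := by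
      rcases Nat.eq_zero_or_pos d with rfl | hd
      · simpa using h
      · have hinv : Tendsto (fun m : ℕ => (((m : ℂ)) ^ d)⁻¹) atTop (𝓝 0) := by
          have := inv_nat_tendsto.pow d
          rw [zero_pow (by omega)] at this
          apply Tendsto.congr ?_ this
          intro m
          rw [inv_pow]
        have := h.mul hinv
        rwa [zero_mul] at this
    have hcd : c d = 0 := tendsto_nhds_unique hmul hbdd
    have hrest : Tendsto (fun m : ℕ => ∑ k ∈ Finset.range d, c k * (m : ℂ) ^ k) atTop (𝓝 0) := by
      apply Tendsto.congr' ?_ h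
      filter_upwards with m
      rw [Finset.sum_range_succ, hcd, zero_mul, add_zero]
    intro k hk
    rcases Nat.lt_or_ge k d with hkd | hkd
    · exact ih hrest k hkd
    · have : k = d := by omega
      rw [this, hcd]

lemma exists_unit_decomp (z : ℂ) (hz : z ≠ 0) :
    ∃ (q : ℚ) (w₁ w₂ : ℂ), 0 < q ∧ ‖w₁‖ = 1 ∧ ‖w₂‖ = 1 ∧
      z = (q : ℂ) * w₁ + (q : ℂ) * w₂ := by
  obtain ⟨q, hq⟩ := exists_rat_gt (‖z‖ / 2)
  have habs : 0 < ‖z‖ := norm_pos_iff.mpr hz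
  have hq0 : 0 < q := by
    have : (0 : ℝ) < ‖z‖ / 2 := by positivity
    exact_mod_cast lt_of_le_of_lt this.le hq
  set ρ : ℝ := ‖z‖ / (2 * q) with hρdef
  have hq0' : (0 : ℝ) < (q : ℝ) := by exact_mod_cast hq0
  have hρpos : 0 < ρ := by positivity
  have hρle : ρ ≤ 1 := by
    rw [hρdef, div_le_one (by positivity)]
    nlinarith
  set r : ℝ := Real.sqrt (1 - ρ ^ 2) with hrdef
  have hr2 : r ^ 2 = 1 - ρ ^ 2 := Real.sq_sqrt (by nlinarith)
  set u : ℂ := z / (‖z‖ : ℝ) with hudef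
  have hu : ‖u‖ = 1 := by
    rw [hudef, norm_div, Complex.norm_of_nonneg habs.le, div_self habs.ne']
  refine ⟨q, ((ρ : ℂ) + (r : ℂ) * Complex.I) * u, ((ρ : ℂ) - (r : ℂ) * Complex.I) * u,
    hq0, ?_, ?_, ?_⟩
  · rw [norm_mul, hu, mul_one, Complex.norm_add_mul_I]
    rw [show ρ ^ 2 + r ^ 2 = 1 by nlinarith]
    exact Real.sqrt_one
  · rw [norm_mul, hu, mul_one]
    rw [show (ρ : ℂ) - (r : ℂ) * Complex.I = (ρ : ℂ) + (-r : ℝ) * Complex.I by push_cast; ring]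
    rw [Complex.norm_add_mul_I]
    rw [show ρ ^ 2 + (-r) ^ 2 = 1 by nlinarith]
    exact Real.sqrt_one
  · have hsum : (q : ℂ) * (((ρ : ℂ) + (r : ℂ) * Complex.I) * u)
        + (q : ℂ) * (((ρ : ℂ) - (r : ℂ) * Complex.I) * u) = (2 * q * ρ : ℝ) * u := by
      push_cast
      ring
    rw [hsum]
    have h2qρ : (2 * (q : ℝ) * ρ) = ‖z‖ := by
      rw [hρdef]
      field_simp
    have hne0 : ((‖z‖ : ℝ) : ℂ) ≠ 0 := by exact_mod_cast habs.ne'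
    have hfin : ((‖z‖ : ℝ) : ℂ) * (z / ((‖z‖ : ℝ) : ℂ)) = z := by
      field_simp
    rw [h2qρ, hudef, hfin]

def coefLM (n : ℕ) (j : ℕ) : Mn n →ₗ[ℂ] ℂ where
  toFun A := coef A j
  map_add' A B := coef_add A B j
  map_smul' c A := coef_smul c A j

lemma coef_tendsto {f : ℕ → Mn n} {A : Mn n} (j : ℕ) (hf : Tendsto f atTop (𝓝 A)) :
    Tendsto (fun m => coef (f m) j) atTop (𝓝 (coef A j)) := by
  have hc : Continuous (coefLM n j) := (coefLM n j).continuous_of_finiteDimensional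
  exact ((hc.tendsto A).comp hf)

/-! ### the conjugated map Φ -/

section Main

variable {φ : Matrix (Fin n) (Fin n) ℂ → Matrix (Fin n) (Fin n) ℂ}

lemma phi_smul (hmul : ∀ X ∈ toeplitzUpper n, ∀ Y ∈ toeplitzUpper n, φ (X * Y) = φ X * φ Y)
    (hscalar : ∀ α : ℂ, φ (α • (1 : Mn n)) = α • (1 : Mn n))
    {A : Mn n} (hA : A ∈ toeplitzUpper n) (c : ℂ) : φ (c • A) = c • φ A := by
  have h1 : c • A = (c • (1 : Mn n)) * A := by rw [smul_mul_assoc, one_mul]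
  rw [h1, hmul _ (smul_mem c one_mem) _ hA, hscalar, smul_mul_assoc, one_mul]

lemma phi_one (hscalar : ∀ α : ℂ, φ (α • (1 : Mn n)) = α • (1 : Mn n)) : φ 1 = 1 := by
  simpa using hscalar 1

lemma phi_S_pow (hmul : ∀ X ∈ toeplitzUpper n, ∀ Y ∈ toeplitzUpper n, φ (X * Y) = φ X * φ Y)
    (hS : φ (jordanS n) = jordanS n)
    (hscalar : ∀ α : ℂ, φ (α • (1 : Mn n)) = α • (1 : Mn n)) (k : ℕ) :
    φ (jordanS n ^ k) = jordanS n ^ k := by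
  induction k with
  | zero => rw [pow_zero]; exact phi_one hscalar
  | succ k ih => rw [pow_succ, hmul _ (Spow_mem k) _ S_mem, ih, hS]

lemma Sn1_mul (hn : 0 < n) {A : Mn n} (hA : A ∈ toeplitzUpper n) :
    jordanS n ^ (n - 1) * A = coef A 0 • jordanS n ^ (n - 1) := by
  conv_lhs => rw [repr hA]
  rw [Finset.mul_sum]
  rw [Finset.sum_eq_single 0]
  · rw [pow_zero, mul_smul_comm, mul_one]
  · intro k _ hk
    rw [mul_smul_comm, ← pow_add, jordanS_pow_zero_of_le (by omega), smul_zero]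
  · intro h; exact absurd (Finset.mem_range.mpr hn) h

lemma phi_coef_zero (hn : 0 < n)
    (hrange : ∀ A ∈ toeplitzUpper n, φ A ∈ toeplitzUpper n)
    (hmul : ∀ X ∈ toeplitzUpper n, ∀ Y ∈ toeplitzUpper n, φ (X * Y) = φ X * φ Y)
    (hS : φ (jordanS n) = jordanS n)
    (hscalar : ∀ α : ℂ, φ (α • (1 : Mn n)) = α • (1 : Mn n))
    {A : Mn n} (hA : A ∈ toeplitzUpper n) : coef (φ A) 0 = coef A 0 := by
  have h1 : φ (jordanS n ^ (n - 1) * A) = jordanS n ^ (n - 1) * φ A := by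
    rw [hmul _ (Spow_mem (n - 1)) _ hA, phi_S_pow hmul hS hscalar]
  rw [Sn1_mul hn hA, phi_smul hmul hscalar (Spow_mem (n-1)), phi_S_pow hmul hS hscalar,
    Sn1_mul hn (hrange A hA)] at h1
  have h2 := congrFun (congrFun h1 ⟨0, hn⟩) ⟨n - 1, by omega⟩
  simp only [Matrix.smul_apply, jordanS_pow_apply, smul_eq_mul] at h2
  rw [if_pos (by simp)] at h2
  simpa using h2.symm

open Classical in
def Phi (φ : Mn n → Mn n) (X : Mn n) : Mn n :=
  if h : ∃ N ∈ J n 1, expo N = φ (expo X) then h.choose else 0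

lemma Phi_spec (hn : 0 < n)
    (hrange : ∀ A ∈ toeplitzUpper n, φ A ∈ toeplitzUpper n)
    (hmul : ∀ X ∈ toeplitzUpper n, ∀ Y ∈ toeplitzUpper n, φ (X * Y) = φ X * φ Y)
    (hS : φ (jordanS n) = jordanS n)
    (hscalar : ∀ α : ℂ, φ (α • (1 : Mn n)) = α • (1 : Mn n))
    {X : Mn n} (hX : X ∈ J n 1) :
    Phi φ X ∈ J n 1 ∧ expo (Phi φ X) = φ (expo X) := by
  have hex : ∃ N ∈ J n 1, expo N = φ (expo X) := by
    apply expo_surj hn (hrange _ (expo_mem hX))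
    rw [phi_coef_zero hn hrange hmul hS hscalar (expo_mem hX), coef_expo_zero hn hX]
  unfold Phi
  rw [dif_pos hex]

  exact ⟨hex.choose_spec.1, hex.choose_spec.2⟩

end Main

section PhiProps

variable {φ : Matrix (Fin n) (Fin n) ℂ → Matrix (Fin n) (Fin n) ℂ}
variable (hn : 0 < n)
  (hrange : ∀ A ∈ toeplitzUpper n, φ A ∈ toeplitzUpper n)
  (hmul : ∀ X ∈ toeplitzUpper n, ∀ Y ∈ toeplitzUpper n, φ (X * Y) = φ X * φ Y)
  (hS : φ (jordanS n) = jordanS n)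
  (hscalar : ∀ α : ℂ, φ (α • (1 : Mn n)) = α • (1 : Mn n))

include hn hrange hmul hS hscalar

lemma Phi_add {X Y : Mn n} (hX : X ∈ J n 1) (hY : Y ∈ J n 1) :
    Phi φ (X + Y) = Phi φ X + Phi φ Y := by
  have sX := Phi_spec hn hrange hmul hS hscalar hX
  have sY := Phi_spec hn hrange hmul hS hscalar hY
  have sXY := Phi_spec hn hrange hmul hS hscalar (J_add hX hY)
  apply expo_inj sXY.1 (J_add sX.1 sY.1)
  rw [sXY.2, expo_add hX hY, hmul _ (expo_mem hX) _ (expo_mem hY), ← sX.2, ← sY.2,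
    ← expo_add sX.1 sY.1]

lemma Phi_zero : Phi φ (0 : Mn n) = 0 := by
  have s0 := Phi_spec hn hrange hmul hS hscalar (J_zero_mem (n := n) 1)
  apply expo_inj s0.1 (J_zero_mem 1)
  rw [s0.2, expo_zero, phi_one hscalar]

lemma Phi_nsmul (m : ℕ) {X : Mn n} (hX : X ∈ J n 1) :
    Phi φ ((m : ℂ) • X) = (m : ℂ) • Phi φ X := by
  induction m with
  | zero => rw [Nat.cast_zero, zero_smul, zero_smul, Phi_zero hn hrange hmul hS hscalar]
  | succ m ih =>
    have hcast : ((m + 1 : ℕ) : ℂ) • X = (m : ℂ) • X + X := by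
      push_cast
      rw [add_smul, one_smul]
    rw [hcast, Phi_add hn hrange hmul hS hscalar (J_smul _ hX) hX, ih]
    push_cast
    rw [add_smul, one_smul]

lemma Phi_neg {X : Mn n} (hX : X ∈ J n 1) : Phi φ (-X) = -Phi φ X := by
  have h := Phi_add hn hrange hmul hS hscalar hX (J_neg hX)
  rw [add_neg_cancel, Phi_zero hn hrange hmul hS hscalar] at h
  exact (neg_eq_of_add_eq_zero_right h.symm).symm

lemma Phi_zsmul (m : ℤ) {X : Mn n} (hX : X ∈ J n 1) :
    Phi φ ((m : ℂ) • X) = (m : ℂ) • Phi φ X := by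
  cases m with
  | ofNat m => exact_mod_cast Phi_nsmul hn hrange hmul hS hscalar m hX
  | negSucc m =>
    have h1 : ((Int.negSucc m : ℤ) : ℂ) = -((m + 1 : ℕ) : ℂ) := by
      push_cast [Int.negSucc_eq]
      ring
    rw [h1, neg_smul, neg_smul, Phi_neg hn hrange hmul hS hscalar (J_smul _ hX),
      Phi_nsmul hn hrange hmul hS hscalar (m + 1) hX]

lemma Phi_qsmul (q : ℚ) {X : Mn n} (hX : X ∈ J n 1) :
    Phi φ ((q : ℂ) • X) = (q : ℂ) • Phi φ X := by
  have hden : ((q.den : ℕ) : ℂ) ≠ 0 := Nat.cast_ne_zero.mpr q.den_nz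
  have h1 : ((q.den : ℕ) : ℂ) • ((q : ℂ) • X) = ((q.num : ℤ) : ℂ) • X := by
    rw [smul_smul]
    congr 1
    have : ((q.den : ℚ) : ℂ) * (q : ℂ) = ((q.num : ℚ) : ℂ) := by
      rw [← Complex.ofReal_ratCast, ← Complex.ofReal_ratCast, ← Complex.ofReal_mul]
      congr 1
      exact_mod_cast Rat.den_mul_eq_num q
    push_cast at this ⊢
    exact this
  have h2 := Phi_nsmul hn hrange hmul hS hscalar q.den (J_smul (q : ℂ) hX)
  rw [h1, Phi_zsmul hn hrange hmul hS hscalar q.num hX] at h2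
  have h4 : Phi φ ((q : ℂ) • X) = ((q.den : ℕ) : ℂ)⁻¹ • (((q.num : ℤ) : ℂ) • Phi φ X) := by
    rw [h2, smul_smul, inv_mul_cancel₀ hden, one_smul]
  rw [h4, smul_smul]
  congr 1
  rw [Rat.cast_def, div_eq_mul_inv, mul_comm]

lemma Phi_sum {ι : Type*} (s : Finset ι) (f : ι → Mn n) (hf : ∀ i ∈ s, f i ∈ J n 1) :
    Phi φ (∑ i ∈ s, f i) = ∑ i ∈ s, Phi φ (f i) := by
  classical
  induction s using Finset.induction with
  | empty => simpa using Phi_zero hn hrange hmul hS hscalar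
  | @insert a s ha ih =>
    rw [Finset.sum_insert ha, Finset.sum_insert ha,
      Phi_add hn hrange hmul hS hscalar (hf a (Finset.mem_insert_self a s))
        (J_sum _ _ fun i hi => hf i (Finset.mem_insert_of_mem hi)),
      ih (fun i hi => hf i (Finset.mem_insert_of_mem hi))]

end PhiProps

section Analytic

variable {φ : Matrix (Fin n) (Fin n) ℂ → Matrix (Fin n) (Fin n) ℂ}
variable (hn : 0 < n)
  (hrange : ∀ A ∈ toeplitzUpper n, φ A ∈ toeplitzUpper n)
  (hcont : ContinuousOn φ (toeplitzUpper n))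
  (hmul : ∀ X ∈ toeplitzUpper n, ∀ Y ∈ toeplitzUpper n, φ (X * Y) = φ X * φ Y)
  (hS : φ (jordanS n) = jordanS n)
  (hscalar : ∀ α : ℂ, φ (α • (1 : Mn n)) = α • (1 : Mn n))

include hn hrange hcont hmul hS hscalar

lemma Phi_fixes_v (θ : ℝ) :
    ∀ k, Phi φ ((Lc k * Complex.exp (θ * Complex.I) ^ k) • jordanS n ^ k)
      = (Lc k * Complex.exp (θ * Complex.I) ^ k) • jordanS n ^ k := by
  set e : ℂ := Complex.exp (θ * Complex.I) with he
  have he0 : e ≠ 0 := Complex.exp_ne_zero _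
  set v : ℕ → Mn n := fun k => (Lc k * e ^ k) • jordanS n ^ k with hv
  have hv1 : ∀ k, v k ∈ J n 1 := by
    intro k
    cases k with
    | zero => simp only [hv, Lc_zero, zero_mul, zero_smul]; exact J_zero_mem 1
    | succ k => exact J_smul _ (J_mono (by omega) (Spow_mem_J (k + 1)))
  have hv0 : v 0 = 0 := by simp only [hv, Lc_zero, zero_mul, zero_smul]
  have hvn : v n = 0 := by
    simp only [hv, jordanS_pow_zero_of_le (le_refl n), smul_zero]
  set a : ℕ → Mn n := fun k => Phi φ (v k) - v k with ha
  have haJ1 : ∀ k, a k ∈ J n 1 := fun k =>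
    J_sub (Phi_spec hn hrange hmul hS hscalar (hv1 k)).1 (hv1 k)
  have ha0 : a 0 = 0 := by
    simp only [ha, hv0, Phi_zero hn hrange hmul hS hscalar, sub_zero]
  have han : a n = 0 := by
    simp only [ha, hvn, Phi_zero hn hrange hmul hS hscalar, sub_zero]
  have hPhiv : ∀ k, Phi φ (v k) = v k + a k := by
    intro k; simp only [ha]; abel
  -- main claim by strong induction
  have main : ∀ j, ∀ k, k < n → coef (a k) j = 0 := by
    intro j
    induction j using Nat.strong_induction_on with
    | _ j IH =>
    rcases Nat.eq_zero_or_pos j with rfl | hj1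
    · exact fun k _ => coef_J (haJ1 k) (by omega)
    rcases Nat.lt_or_ge j n with hjn | hjn
    swap
    · exact fun k _ => coef_of_ge hjn
    -- the interesting case 1 ≤ j < n
    set t : ℕ → ℂ := fun m => (m : ℂ) * e with ht
    have htm : ∀ m : ℕ, 1 ≤ m → t m ≠ 0 := by
      intro m hm
      exact mul_ne_zero (Nat.cast_ne_zero.mpr (by omega)) he0
    have hakJ : ∀ k, k < n → a k ∈ J n j := by
      intro k hk
      exact mem_J_of_coef (J_subset 1 (haJ1 k)) j (fun l hl => IH l hl k hk)
    set R : ℕ → Mn n := fun m => ∑ k ∈ Finset.range n, ((m : ℂ) ^ k) • a k with hR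
    have hRJ : ∀ m, R m ∈ J n j :=
      fun m => J_sum _ _ fun k hk => J_smul _ (hakJ k (Finset.mem_range.mp hk))
    have hRJ1 : ∀ m, R m ∈ J n 1 := fun m => J_mono hj1 (hRJ m)
    have hLdecomp : ∀ m : ℕ, Lt n (t m) = ∑ k ∈ Finset.range n, ((m ^ k : ℕ) : ℂ) • v k := by
      intro m
      rw [Lt]
      apply Finset.sum_congr rfl
      intro k _
      simp only [hv]
      rw [smul_smul]
      congr 1
      rw [ht]
      push_cast
      rw [mul_pow]
      ring
    have hPhiL : ∀ m : ℕ, Phi φ (Lt n (t m)) = Lt n (t m) + R m := by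
      intro m
      rw [hLdecomp m, Phi_sum hn hrange hmul hS hscalar _ _
        (fun k _ => J_smul _ (hv1 k))]
      have hterm : ∀ k ∈ Finset.range n, Phi φ (((m ^ k : ℕ) : ℂ) • v k)
          = ((m ^ k : ℕ) : ℂ) • v k + ((m : ℂ) ^ k) • a k := by
        intro k _
        rw [Phi_nsmul hn hrange hmul hS hscalar (m ^ k) (hv1 k), hPhiv k, smul_add]
        norm_cast
      rw [Finset.sum_congr rfl hterm, Finset.sum_add_distrib, ← hLdecomp m]
    -- the sequence of matrices approaching S
    set B : ℕ → Mn n := fun m => (t m)⁻¹ • (1 : Mn n) + jordanS n with hB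
    have hBmem : ∀ m, B m ∈ toeplitzUpper n :=
      fun m => add_mem (smul_mem _ one_mem) S_mem
    have hBtend : Tendsto B atTop (𝓝 (jordanS n)) := by
      have h1 : Tendsto (fun m : ℕ => (t m)⁻¹) atTop (𝓝 0) := by
        have h2 := inv_nat_tendsto.mul_const e⁻¹
        rw [zero_mul] at h2
        apply Tendsto.congr ?_ h2
        intro m
        rw [ht, mul_inv]
      have h3 := (h1.smul_const (1 : Mn n)).add_const (jordanS n)
      rw [zero_smul, zero_add] at h3
      exact h3
    have hphiBtend : Tendsto (fun m => φ (B m)) atTop (𝓝 (jordanS n)) := by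
      have h4 : Tendsto B atTop (𝓝[toeplitzUpper n] (jordanS n)) :=
        tendsto_nhdsWithin_iff.mpr ⟨hBtend, Filter.Eventually.of_forall hBmem⟩
      have h5 := (hcont _ S_mem).tendsto.comp h4
      rwa [hS] at h5
    -- exact computation of the j-th coefficient of φ (B m)
    have hcoefexact : ∀ m : ℕ, 1 ≤ m →
        coef (φ (B m)) j = (t m)⁻¹ * coef (R m) j + coef (jordanS n) j := by
      intro m hm
      have htm' := htm m hm
      have hBm : B m = (t m)⁻¹ • ((1 : Mn n) + t m • jordanS n) := by
        rw [hB, smul_add, smul_smul, inv_mul_cancel₀ htm', one_smul]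
      set c : ℂ := coef (R m) j with hc
      set Z : Mn n := expo (R m) - 1 - c • jordanS n ^ j with hZ
      have hZJ : Z ∈ J n (j + 1) := by
        have hd1 : R m - c • jordanS n ^ j ∈ J n (j + 1) := J_decomp (hRJ m)
        have hd2 : expo (R m) - 1 - R m ∈ J n (2 * j) := expo_sub_J hj1 (hRJ m)
        have heq : Z = (R m - c • jordanS n ^ j) + (expo (R m) - 1 - R m) := by
          rw [hZ]; abel
        rw [heq]
        exact J_add hd1 (J_mono (by omega) hd2)
      have hexpoR : expo (R m) = 1 + c • jordanS n ^ j + Z := by rw [hZ]; abel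
      have hstep : φ (B m) = (t m)⁻¹ • ((1 + t m • jordanS n) * expo (R m)) := by
        rw [hBm, phi_smul hmul hscalar (one_add_smul_mem (t m)),
          ← expo_Lt hn (t m), ← (Phi_spec hn hrange hmul hS hscalar (Lt_mem_J1 (t m))).2,
          hPhiL m, expo_add (Lt_mem_J1 (t m)) (hRJ1 m), expo_Lt hn (t m)]
      have hprod : (1 + t m • jordanS n) * expo (R m)
          = expo (R m) + t m • (jordanS n * expo (R m)) := by
        rw [add_mul, one_mul, smul_mul_assoc]
      have hSexpoR : jordanS n * expo (R m)
          = jordanS n + c • jordanS n ^ (j + 1) + jordanS n * Z := by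
        rw [hexpoR, mul_add, mul_add, mul_one, mul_smul_comm, ← pow_succ']
      have hcoef1 : coef (expo (R m)) j = c := by
        rw [hexpoR, coef_add, coef_add, coef_smul, coef_one hn, if_neg (by omega),
          coef_pow j j hjn, if_pos rfl, coef_J hZJ (by omega)]
        ring
      have hcoef2 : coef (jordanS n * expo (R m)) j = coef (jordanS n) j := by
        rw [hSexpoR, coef_add, coef_add, coef_smul]
        have hz1 : coef (jordanS n ^ (j + 1)) j = 0 := by
          rcases Nat.lt_or_ge (j + 1) n with hjj | hjj
          · rw [coef_pow (j + 1) j hjj, if_neg (by omega)]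
          · rw [jordanS_pow_zero_of_le hjj, coef_zero]
        have hz2 : coef (jordanS n * Z) j = 0 := by
          have hSJ1 : jordanS n ∈ J n 1 := by simpa using Spow_mem_J (n := n) 1
          exact coef_J (J_mul hSJ1 hZJ) (by omega)
        rw [hz1, hz2]
        ring
      rw [hstep, hprod, coef_smul, coef_add, coef_smul, hcoef1, hcoef2, mul_add,
        ← mul_assoc, inv_mul_cancel₀ htm', one_mul]
    -- pass to the limit
    have htail : Tendsto (fun m : ℕ => (t m)⁻¹ * coef (R m) j) atTop (𝓝 0) := by
      have h6 := (coef_tendsto j hphiBtend).sub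
        (tendsto_const_nhds (x := coef (jordanS n) j) (f := atTop))
      rw [sub_self] at h6
      apply Tendsto.congr' ?_ h6
      filter_upwards [Filter.eventually_ge_atTop 1] with m hm
      rw [hcoefexact m hm, add_sub_cancel_right]
    have hpoly : Tendsto (fun m : ℕ =>
        ∑ k ∈ Finset.range n, (e⁻¹ * coef (a (k + 1)) j) * (m : ℂ) ^ k) atTop (𝓝 0) := by
      apply Tendsto.congr' ?_ htail
      filter_upwards [Filter.eventually_ge_atTop 1] with m hm
      have hm0 : ((m : ℂ)) ≠ 0 := Nat.cast_ne_zero.mpr (by omega)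
      have hcoefR : coef (R m) j
          = ∑ k ∈ Finset.range n, ((m : ℂ) ^ k) * coef (a k) j := by
        rw [hR, coef_sum]
        exact Finset.sum_congr rfl fun k _ => coef_smul _ _ _
      have hshift := sum_shift n (fun k => ((m : ℂ) ^ k) * coef (a k) j)
        (by beta_reduce; rw [han, coef_zero, mul_zero])
      beta_reduce at hshift
      rw [ha0, coef_zero, mul_zero, sub_zero] at hshift
      rw [hcoefR, ← hshift, Finset.mul_sum]
      apply Finset.sum_congr rfl
      intro k _
      rw [ht]
      field_simp
      ring
    have hzero := poly_tendsto_zero n (fun k => e⁻¹ * coef (a (k + 1)) j) hpoly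
    intro k hk
    cases k with
    | zero => rw [ha0, coef_zero]
    | succ k =>
      have := hzero k (by omega)
      rcases mul_eq_zero.mp this with h | h
      · exact absurd h (inv_ne_zero he0)
      · exact h
  -- conclude
  intro k
  have hak : a k = 0 := by
    rcases Nat.lt_or_ge k n with hk | hk
    · apply ext_coef (J_subset 1 (haJ1 k)) zero_mem
      intro l
      rw [coef_zero]
      rcases Nat.lt_or_ge l n with hl | hl
      · exact main l k hk
      · exact coef_of_ge hl
    · simp only [ha, hv, jordanS_pow_zero_of_le hk, smul_zero,
        Phi_zero hn hrange hmul hS hscalar, sub_zero]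
  have := hPhiv k
  rw [hak, add_zero] at this
  exact this

end Analytic

section Final

variable {φ : Matrix (Fin n) (Fin n) ℂ → Matrix (Fin n) (Fin n) ℂ}
variable (hn : 0 < n)
  (hrange : ∀ A ∈ toeplitzUpper n, φ A ∈ toeplitzUpper n)
  (hcont : ContinuousOn φ (toeplitzUpper n))
  (hmul : ∀ X ∈ toeplitzUpper n, ∀ Y ∈ toeplitzUpper n, φ (X * Y) = φ X * φ Y)
  (hS : φ (jordanS n) = jordanS n)
  (hscalar : ∀ α : ℂ, φ (α • (1 : Mn n)) = α • (1 : Mn n))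

include hn hrange hcont hmul hS hscalar

lemma Phi_fixes_unit_smul :
    ∀ k, 1 ≤ k → ∀ w : ℂ, ‖w‖ = 1 →
      Phi φ (w • jordanS n ^ k) = w • jordanS n ^ k := by
  intro k hk w hw
  rcases Nat.lt_or_ge k n with hkn | hkn
  swap
  · rw [jordanS_pow_zero_of_le hkn, smul_zero, Phi_zero hn hrange hmul hS hscalar]
  have hk0 : (k : ℝ) ≠ 0 := Nat.cast_ne_zero.mpr (by omega)
  set θ : ℝ := Complex.arg w / k with hθ
  have hek : Complex.exp ((θ : ℂ) * Complex.I) ^ k = w := by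
    rw [← Complex.exp_nat_mul]
    have harg : (k : ℂ) * ((θ : ℂ) * Complex.I) = (Complex.arg w : ℂ) * Complex.I := by
      rw [hθ]
      push_cast
      rw [← mul_assoc, mul_div_cancel₀]
      exact_mod_cast hk0
    rw [harg]
    have := Complex.norm_mul_exp_arg_mul_I w
    rw [hw] at this
    simpa using this
  have hfix := Phi_fixes_v hn hrange hcont hmul hS hscalar θ k
  rw [hek] at hfix
  set q : ℚ := (-1) ^ (k + 1) / k with hq
  have hq0 : q ≠ 0 := by
    apply div_ne_zero
    · exact pow_ne_zero _ (by norm_num)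
    · exact_mod_cast (by omega : k ≠ 0)
  have hLcq : Lc k = (q : ℂ) := by
    rw [Lc, hq]
    push_cast
    ring
  have hsm : (Lc k * w) • jordanS n ^ k = (q : ℂ) • (w • jordanS n ^ k) := by
    rw [smul_smul, hLcq]
  rw [hsm, Phi_qsmul hn hrange hmul hS hscalar q
    (J_smul _ (J_mono hk (Spow_mem_J k)))] at hfix
  exact smul_right_injective (Mn n) (by exact_mod_cast hq0) hfix

lemma Phi_fixes_smul :
    ∀ k, 1 ≤ k → ∀ z : ℂ, Phi φ (z • jordanS n ^ k) = z • jordanS n ^ k := by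
  intro k hk z
  rcases eq_or_ne z 0 with rfl | hz
  · rw [zero_smul, Phi_zero hn hrange hmul hS hscalar]
  obtain ⟨q, w₁, w₂, hq0, hw1, hw2, hzeq⟩ := exists_unit_decomp z hz
  have hdecomp : z • jordanS n ^ k
      = (q : ℂ) • (w₁ • jordanS n ^ k) + (q : ℂ) • (w₂ • jordanS n ^ k) := by
    rw [hzeq, add_smul, smul_smul, smul_smul]
  rw [hdecomp, Phi_add hn hrange hmul hS hscalar
      (J_smul _ (J_smul _ (J_mono hk (Spow_mem_J k))))
      (J_smul _ (J_smul _ (J_mono hk (Spow_mem_J k)))),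
    Phi_qsmul hn hrange hmul hS hscalar q (J_smul _ (J_mono hk (Spow_mem_J k))),
    Phi_qsmul hn hrange hmul hS hscalar q (J_smul _ (J_mono hk (Spow_mem_J k))),
    Phi_fixes_unit_smul hn hrange hcont hmul hS hscalar k hk w₁ hw1,
    Phi_fixes_unit_smul hn hrange hcont hmul hS hscalar k hk w₂ hw2]

lemma Phi_id {X : Mn n} (hX : X ∈ J n 1) : Phi φ X = X := by
  have hXTA : X ∈ toeplitzUpper n := J_subset 1 hX
  have hrepr := repr hXTA
  have hmemterm : ∀ k ∈ Finset.range n, coef X k • jordanS n ^ k ∈ J n 1 := by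
    intro k _
    cases k with
    | zero =>
      rw [coef_J hX (by omega), zero_smul]
      exact J_zero_mem 1
    | succ k => exact J_smul _ (J_mono (by omega) (Spow_mem_J (k + 1)))
  conv_lhs => rw [hrepr]
  rw [Phi_sum hn hrange hmul hS hscalar _ _ hmemterm]
  conv_rhs => rw [hrepr]
  apply Finset.sum_congr rfl
  intro k _
  cases k with
  | zero =>
    rw [coef_J hX (by omega), zero_smul, Phi_zero hn hrange hmul hS hscalar]
  | succ k =>
    exact Phi_fixes_smul hn hrange hcont hmul hS hscalar (k + 1) (by omega) _

lemma phi_unit {A : Mn n} (hA : A ∈ toeplitzUpper n) (h0 : coef A 0 ≠ 0) : φ A = A := by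
  set u : Mn n := (coef A 0)⁻¹ • A with hu
  have humem : u ∈ toeplitzUpper n := smul_mem _ hA
  have hucoef : coef u 0 = 1 := by
    rw [hu, coef_smul, inv_mul_cancel₀ h0]
  obtain ⟨N, hN, hexpN⟩ := expo_surj hn humem hucoef
  have hAu : A = coef A 0 • u := by
    rw [hu, smul_smul, mul_inv_cancel₀ h0, one_smul]
  rw [hAu, phi_smul hmul hscalar humem, ← hexpN,
    ← (Phi_spec hn hrange hmul hS hscalar hN).2,
    Phi_id hn hrange hcont hmul hS hscalar hN]

end Final

end TU

open TU Filter Topology in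
theorem stmt2 (n : ℕ) (φ : Matrix (Fin n) (Fin n) ℂ → Matrix (Fin n) (Fin n) ℂ)
    (hrange : ∀ A ∈ toeplitzUpper n, φ A ∈ toeplitzUpper n)
    (hcont : ContinuousOn φ (toeplitzUpper n))
    (hmul : ∀ X ∈ toeplitzUpper n, ∀ Y ∈ toeplitzUpper n, φ (X * Y) = φ X * φ Y)
    (hS : φ (jordanS n) = jordanS n)
    (hscalar : ∀ α : ℂ, φ (α • (1 : Matrix (Fin n) (Fin n) ℂ)) = α • (1 : Matrix (Fin n) (Fin n) ℂ)) :
    ∀ A ∈ toeplitzUpper n, φ A = A := by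
  intro A hA
  rcases Nat.eq_zero_or_pos n with hn | hn
  · exact Mn_zero_eq hn _ _
  by_cases h0 : coef A 0 = 0
  · set C : ℕ → Mn n := fun m => A + (((m : ℂ) + 1))⁻¹ • 1 with hC
    have hCmem : ∀ m, C m ∈ toeplitzUpper n :=
      fun m => add_mem hA (smul_mem _ one_mem)
    have hCunit : ∀ m, coef (C m) 0 ≠ 0 := by
      intro m
      rw [hC]
      simp only []
      rw [coef_add, coef_smul, coef_one hn, if_pos rfl, h0, mul_one, zero_add]
      apply inv_ne_zero
      have : ((m : ℂ) + 1) = ((m + 1 : ℕ) : ℂ) := by push_cast; ring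
      rw [this]
      exact Nat.cast_ne_zero.mpr (by omega)
    have hCphi : ∀ m, φ (C m) = C m :=
      fun m => phi_unit hn hrange hcont hmul hS hscalar (hCmem m) (hCunit m)
    have hCtend : Tendsto C atTop (𝓝 A) := by
      have h1 : Tendsto (fun m : ℕ => ((m : ℂ) + 1)⁻¹) atTop (𝓝 0) := by
        have h2 := inv_nat_tendsto.comp (tendsto_add_atTop_nat 1)
        apply Tendsto.congr ?_ h2
        intro m
        simp only [Function.comp_apply]
        push_cast
        ring_nf
      have h3 := (h1.smul_const (1 : Mn n)).const_add A
      rw [zero_smul, add_zero] at h3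
      exact h3
    have h4 : Tendsto C atTop (𝓝[toeplitzUpper n] A) :=
      tendsto_nhdsWithin_iff.mpr ⟨hCtend, Filter.Eventually.of_forall hCmem⟩
    have h5 := (hcont A hA).tendsto.comp h4
    have h6 : Tendsto (fun m => φ (C m)) atTop (𝓝 A) := by
      apply Tendsto.congr' ?_ hCtend
      filter_upwards with m
      rw [hCphi m]
    exact tendsto_nhds_unique h5 h6
  · exact phi_unit hn hrange hcont hmul hS hscalar hA h0
end
end

section
/- Let n > 1 and let φ : 𝒜 → 𝒜 be a continuous, multiplicative, norm-preserving map (‖φ(A)‖ = ‖A‖ and φ(XY) = φ(X)φ(Y) for all A, X, Y ∈ 𝒜) such that φ(S) = S. Then φ is either homogeneous (φ(αA) = α φ(A) for all α ∈ ℂ and A ∈ 𝒜) or skew-homogeneous (φ(αA) = \overline{α} φ(A) for all α ∈ ℂ and A ∈ 𝒜, where \overline{α} is the complex conjugate). -/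
open scoped Matrix Matrix.Norms.L2Operator
open Filter Topology

noncomputable section

namespace Stmt3Aux

variable {n : ℕ}

lemma mem_zero : (0 : Matrix (Fin n) (Fin n) ℂ) ∈ toeplitzUpper n := by
  constructor <;> intros <;> simp

lemma mem_add {A B : Matrix (Fin n) (Fin n) ℂ} (hA : A ∈ toeplitzUpper n)
    (hB : B ∈ toeplitzUpper n) : A + B ∈ toeplitzUpper n := by
  refine ⟨fun i j h => ?_, fun i j i' j' h => ?_⟩
  · simp [Matrix.add_apply, hA.1 i j h, hB.1 i j h]
  · simp [Matrix.add_apply, hA.2 i j i' j' h, hB.2 i j i' j' h]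

lemma mem_smul {A : Matrix (Fin n) (Fin n) ℂ} (α : ℂ) (hA : A ∈ toeplitzUpper n) :
    α • A ∈ toeplitzUpper n := by
  refine ⟨fun i j h => ?_, fun i j i' j' h => ?_⟩
  · simp [Matrix.smul_apply, hA.1 i j h]
  · simp [Matrix.smul_apply, hA.2 i j i' j' h]

lemma jordanS_pow_apply (k : ℕ) (i j : Fin n) :
    ((jordanS n) ^ k) i j = if (i : ℕ) + k = (j : ℕ) then 1 else 0 := by
  induction k generalizing j with
  | zero =>
    simp [Matrix.one_apply, Fin.ext_iff]
  | succ k ih =>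
    rw [pow_succ, Matrix.mul_apply]
    by_cases hj : 1 ≤ (j : ℕ)
    · have hj' : (j : ℕ) - 1 < n := lt_of_le_of_lt (Nat.sub_le _ _) j.isLt
      have hsum : ∀ l : Fin n, ((jordanS n) ^ k) i l * (jordanS n) l j
          = if l = ⟨(j : ℕ) - 1, hj'⟩ then ((jordanS n) ^ k) i l else 0 := by
        intro l
        simp only [jordanS, Matrix.of_apply]
        by_cases hl : l = ⟨(j : ℕ) - 1, hj'⟩
        · subst hl; simp only [if_pos rfl]
          have : ((j : ℕ) - 1) + 1 = (j : ℕ) := by omega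
          simp [this]
        · have : ¬ ((l : ℕ) + 1 = (j : ℕ)) := by
            intro hc; apply hl; apply Fin.ext; simp; omega
          simp [this, hl]
      rw [Finset.sum_congr rfl (fun l _ => hsum l), Finset.sum_ite_eq' Finset.univ]
      simp only [Finset.mem_univ, if_pos, ih]
      have : ((i : ℕ) + k = (j : ℕ) - 1) ↔ ((i : ℕ) + (k + 1) = (j : ℕ)) := by omega
      simp [this]
    · have h0 : (j : ℕ) = 0 := by omega
      have : ∀ l : Fin n, ((jordanS n) ^ k) i l * (jordanS n) l j = 0 := by
        intro l
        have : (jordanS n) l j = 0 := by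
          simp only [jordanS, Matrix.of_apply]
          have : ¬ ((l : ℕ) + 1 = (j : ℕ)) := by omega
          simp [this]
        simp [this]
      rw [Finset.sum_congr rfl (fun l _ => this l)]
      have : ¬ ((i : ℕ) + (k + 1) = (j : ℕ)) := by omega
      simp [this]

lemma mem_pow_S (k : ℕ) : (jordanS n) ^ k ∈ toeplitzUpper n := by
  refine ⟨fun i j h => ?_, fun i j i' j' h => ?_⟩
  · rw [jordanS_pow_apply]
    have : ¬ ((i : ℕ) + k = (j : ℕ)) := by omega
    simp [this]
  · rw [jordanS_pow_apply, jordanS_pow_apply]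
    have : ((i : ℕ) + k = (j : ℕ)) ↔ ((i' : ℕ) + k = (j' : ℕ)) := by omega
    simp [this]

lemma mem_S : jordanS n ∈ toeplitzUpper n := by
  simpa using mem_pow_S (n := n) 1

lemma mem_one : (1 : Matrix (Fin n) (Fin n) ℂ) ∈ toeplitzUpper n := by
  simpa using mem_pow_S (n := n) 0

lemma mul_pow_S_apply (A : Matrix (Fin n) (Fin n) ℂ) (k : ℕ) (i j : Fin n) :
    (A * (jordanS n) ^ k) i j =
      if h : k ≤ (j : ℕ) then A i ⟨(j : ℕ) - k, lt_of_le_of_lt (Nat.sub_le _ _) j.isLt⟩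
      else 0 := by
  rw [Matrix.mul_apply]
  by_cases h : k ≤ (j : ℕ)
  · have hj' : (j : ℕ) - k < n := lt_of_le_of_lt (Nat.sub_le _ _) j.isLt
    have hsum : ∀ l : Fin n, A i l * ((jordanS n) ^ k) l j
        = if l = ⟨(j : ℕ) - k, hj'⟩ then A i l else 0 := by
      intro l
      rw [jordanS_pow_apply]
      by_cases hl : l = ⟨(j : ℕ) - k, hj'⟩
      · subst hl
        have : ((j : ℕ) - k) + k = (j : ℕ) := by omega
        simp [this]
      · have : ¬ ((l : ℕ) + k = (j : ℕ)) := by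
          intro hc; apply hl; apply Fin.ext; simp; omega
        simp [this, hl]
    rw [Finset.sum_congr rfl (fun l _ => hsum l), Finset.sum_ite_eq' Finset.univ]
    simp [h]
  · have hz : ∀ l : Fin n, A i l * ((jordanS n) ^ k) l j = 0 := by
      intro l
      rw [jordanS_pow_apply]
      have : ¬ ((l : ℕ) + k = (j : ℕ)) := by omega
      simp [this]
    rw [Finset.sum_congr rfl (fun l _ => hz l)]
    simp [h]

lemma sum_sq_col_le (A : Matrix (Fin n) (Fin n) ℂ) (j : Fin n) (s : Finset (Fin n)) :
    ∑ i ∈ s, ‖A i j‖ ^ 2 ≤ ‖A‖ ^ 2 := by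
  have h1 := A.l2_opNorm_mulVec (EuclideanSpace.single j (1 : ℂ))
  rw [EuclideanSpace.norm_single, norm_one, mul_one] at h1
  have hy : ∀ i, ((EuclideanSpace.equiv (Fin n) ℂ).symm
      (A *ᵥ (EuclideanSpace.single j (1 : ℂ)))) i = A i j := by
    intro i
    show (A *ᵥ (EuclideanSpace.single j (1 : ℂ))) i = A i j
    simp [Matrix.mulVec, dotProduct, EuclideanSpace.single_apply, mul_ite]
  calc ∑ i ∈ s, ‖A i j‖ ^ 2 ≤ ∑ i, ‖A i j‖ ^ 2 :=
        Finset.sum_le_sum_of_subset_of_nonneg (Finset.subset_univ s)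
          (fun i _ _ => by positivity)
    _ = ‖(EuclideanSpace.equiv (Fin n) ℂ).symm (A *ᵥ (EuclideanSpace.single j (1 : ℂ)))‖ ^ 2 := by
        rw [EuclideanSpace.norm_eq, Real.sq_sqrt (by positivity)]
        exact Finset.sum_congr rfl fun i _ => by rw [hy]
    _ ≤ ‖A‖ ^ 2 := by
        have := norm_nonneg ((EuclideanSpace.equiv (Fin n) ℂ).symm
          (A *ᵥ (EuclideanSpace.single j (1 : ℂ))))
        nlinarith

lemma entry_norm_le (A : Matrix (Fin n) (Fin n) ℂ) (i j : Fin n) : ‖A i j‖ ≤ ‖A‖ := by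
  have h := sum_sq_col_le A j {i}
  simp only [Finset.sum_singleton] at h
  have h2 : ‖A i j‖ = Real.sqrt (‖A i j‖ ^ 2) := (Real.sqrt_sq (norm_nonneg _)).symm
  rw [h2]
  calc Real.sqrt (‖A i j‖ ^ 2) ≤ Real.sqrt (‖A‖ ^ 2) := Real.sqrt_le_sqrt h
    _ = ‖A‖ := Real.sqrt_sq (norm_nonneg _)

lemma entry_lipschitz (i j : Fin n) :
    LipschitzWith 1 (fun A : Matrix (Fin n) (Fin n) ℂ => A i j) :=
  LipschitzWith.of_dist_le_mul fun A B => by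
    rw [NNReal.coe_one, one_mul, dist_eq_norm, dist_eq_norm]
    have : A i j - B i j = (A - B) i j := by simp
    rw [this]
    exact entry_norm_le _ i j

lemma toeplitz_apply (hn0 : 0 < n) {X : Matrix (Fin n) (Fin n) ℂ}
    (hX : X ∈ toeplitzUpper n) (i j : Fin n) :
    X i j = if h : (i : ℕ) ≤ (j : ℕ) then
      X ⟨0, hn0⟩ ⟨(j : ℕ) - (i : ℕ), lt_of_le_of_lt (Nat.sub_le _ _) j.isLt⟩ else 0 := by
  by_cases h : (i : ℕ) ≤ (j : ℕ)
  · rw [dif_pos h]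
    exact hX.2 i j _ _ (by simp only [Fin.val_mk]; push_cast; omega)
  · rw [dif_neg h]
    exact hX.1 i j (by omega)

lemma mul_apply_00 (hn0 : 0 < n) (A : Matrix (Fin n) (Fin n) ℂ)
    {B : Matrix (Fin n) (Fin n) ℂ} (hB : B ∈ toeplitzUpper n) :
    (A * B) ⟨0, hn0⟩ ⟨0, hn0⟩ = A ⟨0, hn0⟩ ⟨0, hn0⟩ * B ⟨0, hn0⟩ ⟨0, hn0⟩ := by
  rw [Matrix.mul_apply]
  apply Finset.sum_eq_single
  · intro l _ hl
    have : B l ⟨0, hn0⟩ = 0 := hB.1 l ⟨0, hn0⟩ (by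
      simp only [Fin.val_mk]
      rcases Nat.eq_zero_or_pos (l : ℕ) with h | h
      · exact absurd (Fin.ext h) hl
      · exact h)
    simp [this]
  · intro h
    exact absurd (Finset.mem_univ _) h

lemma mul_apply_01 (hn : 1 < n) (A : Matrix (Fin n) (Fin n) ℂ)
    {B : Matrix (Fin n) (Fin n) ℂ} (hB : B ∈ toeplitzUpper n) :
    (A * B) ⟨0, by omega⟩ ⟨1, hn⟩ =
      A ⟨0, by omega⟩ ⟨0, by omega⟩ * B ⟨0, by omega⟩ ⟨1, hn⟩ +
        A ⟨0, by omega⟩ ⟨1, hn⟩ * B ⟨0, by omega⟩ ⟨0, by omega⟩ := by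
  have hn0 : 0 < n := by omega
  rw [Matrix.mul_apply]
  have hsub : ({⟨0, hn0⟩, ⟨1, hn⟩} : Finset (Fin n)) ⊆ Finset.univ := Finset.subset_univ _
  have hvan : ∀ l ∈ Finset.univ, l ∉ ({⟨0, hn0⟩, ⟨1, hn⟩} : Finset (Fin n)) →
      A ⟨0, hn0⟩ l * B l ⟨1, hn⟩ = 0 := by
    intro l _ hl
    simp only [Finset.mem_insert, Finset.mem_singleton] at hl
    push_neg at hl
    have h1 : (l : ℕ) ≠ 0 := fun h => hl.1 (Fin.ext h)
    have h2 : (l : ℕ) ≠ 1 := fun h => hl.2 (Fin.ext h)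
    have : B l ⟨1, hn⟩ = 0 := hB.1 l ⟨1, hn⟩ (by simp only [Fin.val_mk]; omega)
    simp [this]
  rw [← Finset.sum_subset hsub hvan]
  have hne : (⟨0, hn0⟩ : Fin n) ≠ ⟨1, hn⟩ := by simp [Fin.ext_iff]
  rw [Finset.sum_pair hne]
  have : B ⟨1, hn⟩ ⟨1, hn⟩ = B ⟨0, hn0⟩ ⟨0, hn0⟩ := hB.2 _ _ _ _ (by simp)
  rw [this]

lemma expand_two (x y : ℂ) :
    ((1 : Matrix (Fin n) (Fin n) ℂ) + x • jordanS n) * (1 + y • jordanS n) =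
      1 + (x + y) • jordanS n + (x * y) • ((jordanS n) ^ 2) := by
  rw [pow_two]
  simp only [add_mul, mul_add, one_mul, mul_one, smul_mul_assoc, Matrix.mul_smul, smul_smul,
    add_smul]
  abel

lemma toeplitz_mul_pow_pre (hn0 : 0 < n) {X : Matrix (Fin n) (Fin n) ℂ}
    (hX : X ∈ toeplitzUpper n) (hd : X ⟨0, hn0⟩ ⟨0, hn0⟩ = 1) :
    X * (jordanS n) ^ (n - 1) = (jordanS n) ^ (n - 1) := by
  ext i j
  rw [mul_pow_S_apply, jordanS_pow_apply]
  by_cases h : n - 1 ≤ (j : ℕ)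
  · rw [dif_pos h]
    rw [toeplitz_apply hn0 hX]
    simp only [Fin.val_mk]
    have hj : (j : ℕ) - (n - 1) = 0 := by omega
    by_cases hi : (i : ℕ) ≤ (j : ℕ) - (n - 1)
    · rw [dif_pos hi]
      have hi0 : (i : ℕ) = 0 := by omega
      have hidx : ((j : ℕ) - (n - 1)) - (i : ℕ) = 0 := by omega
      have hcond : (i : ℕ) + (n - 1) = (j : ℕ) := by omega
      simp only [hidx, if_pos hcond]
      convert hd using 2
    · rw [dif_neg hi]
      have : ¬ ((i : ℕ) + (n - 1) = (j : ℕ)) := by omega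
      simp [this]
  · rw [dif_neg h]
    have : ¬ ((i : ℕ) + (n - 1) = (j : ℕ)) := by omega
    simp [this]

lemma toeplitz_mul_pow_pre2 (hn : 1 < n) {X : Matrix (Fin n) (Fin n) ℂ}
    (hX : X ∈ toeplitzUpper n) (hd : X ⟨0, by omega⟩ ⟨0, by omega⟩ = 1) :
    X * (jordanS n) ^ (n - 2) =
      (1 + (X ⟨0, by omega⟩ ⟨1, hn⟩) • jordanS n) * (jordanS n) ^ (n - 2) := by
  have hn0 : 0 < n := by omega
  ext i j
  rw [mul_pow_S_apply, mul_pow_S_apply]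
  by_cases h : n - 2 ≤ (j : ℕ)
  · rw [dif_pos h, dif_pos h]
    have hm1 : (j : ℕ) - (n - 2) ≤ 1 := by omega
    rw [toeplitz_apply hn0 hX]
    simp only [Matrix.add_apply, Matrix.one_apply, Matrix.smul_apply, jordanS, Matrix.of_apply,
      Fin.val_mk, smul_eq_mul, Fin.ext_iff]
    by_cases hm : (j : ℕ) - (n - 2) = 0
    · simp only [hm]
      by_cases hi : (i : ℕ) ≤ 0
      · rw [dif_pos hi]
        have hi0 : (i : ℕ) = 0 := by omega
        have : ¬ ((i : ℕ) + 1 = 0) := by omega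
        simp only [Nat.zero_sub, hi0, if_pos rfl, this, if_neg this]
        have : X ⟨0, hn0⟩ ⟨0 - 0, by omega⟩ = X ⟨0, hn0⟩ ⟨0, hn0⟩ := rfl
        rw [this, hd]; norm_num
      · rw [dif_neg hi]
        have h1 : ¬ ((i : ℕ) = 0) := by omega
        have h2 : ¬ ((i : ℕ) + 1 = 0) := by omega
        simp [h1, h2]
    · have hm' : (j : ℕ) - (n - 2) = 1 := by omega
      simp only [hm']
      by_cases hi0 : (i : ℕ) = 0
      · have hle : (i : ℕ) ≤ 1 := by omega
        rw [dif_pos hle]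
        have h1 : ¬ ((i : ℕ) = 1) := by omega
        have h2 : (i : ℕ) + 1 = 1 := by omega
        simp only [h1, if_neg h1, if_pos h2]
        have : X ⟨0, hn0⟩ ⟨1 - (i : ℕ), by omega⟩ = X ⟨0, hn0⟩ ⟨1, hn⟩ := by
          congr 1; apply Fin.ext; simp [hi0]
        rw [this]; norm_num
      · by_cases hi1 : (i : ℕ) = 1
        · have hle : (i : ℕ) ≤ 1 := by omega
          rw [dif_pos hle]
          have h2 : ¬ ((i : ℕ) + 1 = 1) := by omega
          have hidx : 1 - (i : ℕ) = 0 := by omega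
          simp only [hidx, hi1, if_pos rfl, if_neg h2]
          have : X ⟨0, hn0⟩ ⟨0, by omega⟩ = X ⟨0, hn0⟩ ⟨0, hn0⟩ := rfl
          rw [this, hd]; norm_num
        · have hle : ¬ ((i : ℕ) ≤ 1) := by omega
          rw [dif_neg hle]
          have h2 : ¬ ((i : ℕ) + 1 = 1) := by omega
          simp [hi0, hi1, h2]
  · rw [dif_neg h, dif_neg h]

lemma extract_entry (hn0 : 0 < n) (A : Matrix (Fin n) (Fin n) ℂ) (k m : ℕ) (hkm : k + m < n) :
    (A * jordanS n ^ k) ⟨0, hn0⟩ ⟨k + m, hkm⟩ =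
      A ⟨0, hn0⟩ ⟨m, lt_of_le_of_lt (Nat.le_add_left m k) hkm⟩ := by
  rw [mul_pow_S_apply]
  rw [dif_pos (show k ≤ ((⟨k + m, hkm⟩ : Fin n) : ℕ) by simp)]
  congr 1
  apply Fin.ext
  simp

end Stmt3Aux

open Stmt3Aux

theorem stmt3 (n : ℕ) (hn : 1 < n) (φ : Matrix (Fin n) (Fin n) ℂ → Matrix (Fin n) (Fin n) ℂ)
    (hrange : ∀ A ∈ toeplitzUpper n, φ A ∈ toeplitzUpper n)
    (hcont : ContinuousOn φ (toeplitzUpper n))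
    (hmul : ∀ X ∈ toeplitzUpper n, ∀ Y ∈ toeplitzUpper n, φ (X * Y) = φ X * φ Y)
    (hnorm : ∀ A ∈ toeplitzUpper n, ‖φ A‖ = ‖A‖)
    (hS : φ (jordanS n) = jordanS n) :
    (∀ (α : ℂ), ∀ A ∈ toeplitzUpper n, φ (α • A) = α • φ A) ∨
      (∀ (α : ℂ), ∀ A ∈ toeplitzUpper n, φ (α • A) = (starRingEnd ℂ) α • φ A) := by
  classical
  have hn0 : 0 < n := by omega
  -- φ 0 = 0
  have hφ0 : φ 0 = 0 := by
    have h := hnorm 0 mem_zero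
    rw [norm_zero] at h
    exact norm_eq_zero.mp h
  -- φ (S^k) = S^k for k ≥ 1
  have hpow : ∀ k : ℕ, φ (jordanS n ^ (k + 1)) = jordanS n ^ (k + 1) := by
    intro k
    induction k with
    | zero => simpa using hS
    | succ k ih =>
      have h := hmul (jordanS n ^ (k + 1)) (mem_pow_S _) (jordanS n) mem_S
      rw [← pow_succ] at h
      rw [h, ih, hS, ← pow_succ]
  -- diagonal lemma
  have hdiag : ∀ {X : Matrix (Fin n) (Fin n) ℂ}, X ∈ toeplitzUpper n →
      X ⟨0, hn0⟩ ⟨0, hn0⟩ = 1 → φ X ⟨0, hn0⟩ ⟨0, hn0⟩ = 1 := by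
    intro X hX hd
    have hps : φ (jordanS n ^ (n - 1)) = jordanS n ^ (n - 1) := by
      have e1 : n - 1 = (n - 2) + 1 := by omega
      rw [e1]; exact hpow _
    have h2 : φ X * jordanS n ^ (n - 1) = jordanS n ^ (n - 1) := by
      calc φ X * jordanS n ^ (n - 1) = φ (X * jordanS n ^ (n - 1)) := by
            rw [hmul X hX _ (mem_pow_S _), hps]
        _ = jordanS n ^ (n - 1) := by rw [toeplitz_mul_pow_pre hn0 hX hd, hps]
    have h3 : (φ X * jordanS n ^ (n - 1)) ⟨0, hn0⟩ ⟨(n - 1) + 0, by omega⟩ =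
        ((1 : Matrix (Fin n) (Fin n) ℂ) * jordanS n ^ (n - 1)) ⟨0, hn0⟩ ⟨(n - 1) + 0, by omega⟩ := by
      rw [h2, one_mul]
    rw [extract_entry, extract_entry] at h3
    rw [h3]
    exact Matrix.one_apply_eq _
  -- the scalar function c
  set c : ℂ → ℂ := fun α => φ (α • 1) ⟨0, hn0⟩ ⟨0, hn0⟩ with hcdef
  have hsmul_one_mul : ∀ (α β : ℂ),
      (α • (1 : Matrix (Fin n) (Fin n) ℂ)) * (β • (1 : Matrix (Fin n) (Fin n) ℂ))
        = (α * β) • (1 : Matrix (Fin n) (Fin n) ℂ) := by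
    intro α β
    rw [smul_mul_assoc, one_mul, smul_smul]
  have hc_mul : ∀ α β : ℂ, c (α * β) = c α * c β := by
    intro α β
    have h := hmul (α • 1) (mem_smul _ mem_one) (β • 1) (mem_smul _ mem_one)
    rw [hsmul_one_mul] at h
    calc c (α * β) = φ ((α * β) • 1) ⟨0, hn0⟩ ⟨0, hn0⟩ := rfl
      _ = (φ (α • 1) * φ (β • 1)) ⟨0, hn0⟩ ⟨0, hn0⟩ := by rw [← h]
      _ = c α * c β := mul_apply_00 hn0 _ (hrange _ (mem_smul _ mem_one))
  have hc_one : c 1 = 1 := by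
    show φ ((1 : ℂ) • 1) ⟨0, hn0⟩ ⟨0, hn0⟩ = 1
    rw [one_smul]
    exact hdiag mem_one (Matrix.one_apply_eq _)
  have hc_zero : c 0 = 0 := by
    show φ ((0 : ℂ) • 1) ⟨0, hn0⟩ ⟨0, hn0⟩ = 0
    rw [zero_smul, hφ0]
    rfl
  haveI : Nontrivial (Matrix (Fin n) (Fin n) ℂ) := by
    refine nontrivial_of_ne 1 0 fun h => ?_
    have := congrArg (fun A : Matrix (Fin n) (Fin n) ℂ => A ⟨0, hn0⟩ ⟨0, hn0⟩) h
    simp only [Matrix.one_apply_eq, Matrix.zero_apply] at this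
    exact one_ne_zero this
  have hnorm_one : ‖(1 : Matrix (Fin n) (Fin n) ℂ)‖ = 1 := CStarRing.norm_one
  have hc_abs_le : ∀ α : ℂ, ‖c α‖ ≤ ‖α‖ := by
    intro α
    calc ‖c α‖ ≤ ‖φ (α • 1)‖ := entry_norm_le _ _ _
      _ = ‖α • (1 : Matrix (Fin n) (Fin n) ℂ)‖ := hnorm _ (mem_smul _ mem_one)
      _ = ‖α‖ := by rw [norm_smul, hnorm_one, mul_one]
  have hc_abs : ∀ α : ℂ, ‖c α‖ = ‖α‖ := by
    intro α
    rcases eq_or_ne α 0 with rfl | hα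
    · simp [hc_zero]
    · refine le_antisymm (hc_abs_le α) ?_
      have h1 : c α * c α⁻¹ = 1 := by rw [← hc_mul, mul_inv_cancel₀ hα, hc_one]
      have h2 : ‖c α‖ * ‖c α⁻¹‖ = 1 := by rw [← norm_mul, h1, norm_one]
      have h3 : ‖c α⁻¹‖ ≤ ‖α‖⁻¹ := by simpa [norm_inv] using hc_abs_le α⁻¹
      have hα' : 0 < ‖α‖ := norm_pos_iff.mpr hα
      have h4 : 1 ≤ ‖c α‖ * ‖α‖⁻¹ := by
        rw [← h2]
        exact mul_le_mul_of_nonneg_left h3 (norm_nonneg _)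
      have h5 := mul_le_mul_of_nonneg_left h4 (le_of_lt hα')
      rw [mul_one] at h5
      calc ‖α‖ ≤ ‖α‖ * (‖c α‖ * ‖α‖⁻¹) := h5
        _ = ‖c α‖ := by
          field_simp
  -- φ on scalars is scalar
  have hscalar : ∀ α : ℂ, φ (α • 1) = c α • (1 : Matrix (Fin n) (Fin n) ℂ) := by
    intro α
    rcases eq_or_ne α 0 with rfl | hα
    · rw [zero_smul, hφ0, hc_zero, zero_smul]
    · have hFmem : φ (α • 1) ∈ toeplitzUpper n := hrange _ (mem_smul _ mem_one)
      have hFnorm : ‖φ (α • 1)‖ = ‖α‖ := by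
        rw [hnorm _ (mem_smul _ mem_one), norm_smul, hnorm_one, mul_one]
      have hF00 : φ (α • 1) ⟨0, hn0⟩ ⟨0, hn0⟩ = c α := rfl
      have hcoef : ∀ (d : ℕ) (hdn : d < n), 1 ≤ d → φ (α • 1) ⟨0, hn0⟩ ⟨d, hdn⟩ = 0 := by
        intro d hdn hd1
        have hia : (⟨n - 1, by omega⟩ : Fin n) ≠ ⟨n - 1 - d, by omega⟩ := by
          simp only [ne_eq, Fin.mk.injEq]
          omega
        have hsum := sum_sq_col_le (φ (α • 1)) ⟨n - 1, by omega⟩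
          ({⟨n - 1, by omega⟩, ⟨n - 1 - d, by omega⟩} : Finset (Fin n))
        rw [Finset.sum_pair hia] at hsum
        have e1 : φ (α • 1) ⟨n - 1, by omega⟩ ⟨n - 1, by omega⟩
            = φ (α • 1) ⟨0, hn0⟩ ⟨0, hn0⟩ := hFmem.2 _ _ _ _ (by simp)
        have e2 : φ (α • 1) ⟨n - 1 - d, by omega⟩ ⟨n - 1, by omega⟩
            = φ (α • 1) ⟨0, hn0⟩ ⟨d, hdn⟩ := hFmem.2 _ _ _ _ (by
          simp only [Fin.val_mk]
          push_cast
          omega)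
        rw [e1, e2, hF00, hc_abs, hFnorm] at hsum
        have hnn := norm_nonneg (φ (α • 1) ⟨0, hn0⟩ ⟨d, hdn⟩)
        have hsq : ‖φ (α • 1) ⟨0, hn0⟩ ⟨d, hdn⟩‖ = 0 := by nlinarith
        exact norm_eq_zero.mp hsq
      ext i j
      rw [toeplitz_apply hn0 hFmem]
      by_cases hij : (i : ℕ) ≤ (j : ℕ)
      · rw [dif_pos hij]
        rcases eq_or_ne ((j : ℕ) - (i : ℕ)) 0 with h0 | hne
        · have hij' : i = j := Fin.ext (by omega)
          have hidx : φ (α • 1) ⟨0, hn0⟩ ⟨(j : ℕ) - (i : ℕ),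
              lt_of_le_of_lt (Nat.sub_le _ _) j.isLt⟩ = φ (α • 1) ⟨0, hn0⟩ ⟨0, hn0⟩ := by
            congr 1
            exact Fin.ext (by simp [h0])
          rw [hidx, hF00]
          subst hij'
          rw [Matrix.smul_apply, Matrix.one_apply_eq, smul_eq_mul, mul_one]
        · have h1 : 1 ≤ (j : ℕ) - (i : ℕ) := by omega
          rw [hcoef _ _ h1]
          have : i ≠ j := fun h => hne (by rw [h]; omega)
          rw [Matrix.smul_apply, Matrix.one_apply_ne this, smul_eq_mul, mul_zero]
      · rw [dif_neg hij]
        have : i ≠ j := fun h => hij (by rw [h])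
        rw [Matrix.smul_apply, Matrix.one_apply_ne this, smul_eq_mul, mul_zero]
  -- φ (α • A) = c α • φ A
  have hphismul : ∀ (α : ℂ) {A : Matrix (Fin n) (Fin n) ℂ}, A ∈ toeplitzUpper n →
      φ (α • A) = c α • φ A := by
    intro α A hA
    have h1 : (α • (1 : Matrix (Fin n) (Fin n) ℂ)) * A = α • A := by
      rw [smul_mul_assoc, one_mul]
    rw [← h1, hmul _ (mem_smul _ mem_one) _ hA, hscalar, smul_mul_assoc, one_mul]
  have hφ1 : φ (1 : Matrix (Fin n) (Fin n) ℂ) = 1 := by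
    have h := hscalar 1
    rwa [one_smul, hc_one, one_smul] at h
  have hpow' : ∀ k : ℕ, φ (jordanS n ^ k) = jordanS n ^ k := by
    intro k
    cases k with
    | zero => simpa using hφ1
    | succ k => exact hpow k
  -- the e function
  set e : ℂ → ℂ := fun γ => φ (1 + γ • jordanS n) ⟨0, hn0⟩ ⟨1, hn⟩ with hedef
  have hmem1g : ∀ γ : ℂ, ((1 : Matrix (Fin n) (Fin n) ℂ) + γ • jordanS n) ∈ toeplitzUpper n :=
    fun γ => mem_add mem_one (mem_smul _ mem_S)
  have h1gS00 : ∀ γ : ℂ, ((1 : Matrix (Fin n) (Fin n) ℂ) + γ • jordanS n) ⟨0, hn0⟩ ⟨0, hn0⟩ = 1 := by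
    intro γ
    simp [Matrix.add_apply, Matrix.one_apply, Matrix.smul_apply, jordanS]
  have hE : ∀ {X : Matrix (Fin n) (Fin n) ℂ}, X ∈ toeplitzUpper n →
      X ⟨0, hn0⟩ ⟨0, hn0⟩ = 1 → φ X ⟨0, hn0⟩ ⟨1, hn⟩ = e (X ⟨0, hn0⟩ ⟨1, hn⟩) := by
    intro X hX hd1
    have h2 : φ X * jordanS n ^ (n - 2)
        = φ (1 + (X ⟨0, hn0⟩ ⟨1, hn⟩) • jordanS n) * jordanS n ^ (n - 2) := by
      calc φ X * jordanS n ^ (n - 2) = φ (X * jordanS n ^ (n - 2)) := by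
            rw [hmul X hX _ (mem_pow_S _), hpow']
        _ = φ ((1 + (X ⟨0, hn0⟩ ⟨1, hn⟩) • jordanS n) * jordanS n ^ (n - 2)) := by
            rw [toeplitz_mul_pow_pre2 hn hX hd1]
        _ = φ (1 + (X ⟨0, hn0⟩ ⟨1, hn⟩) • jordanS n) * jordanS n ^ (n - 2) := by
            rw [hmul _ (hmem1g _) _ (mem_pow_S _), hpow']
    have h3 : (φ X * jordanS n ^ (n - 2)) ⟨0, hn0⟩ ⟨(n - 2) + 1, by omega⟩ =
        (φ (1 + (X ⟨0, hn0⟩ ⟨1, hn⟩) • jordanS n) * jordanS n ^ (n - 2))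
          ⟨0, hn0⟩ ⟨(n - 2) + 1, by omega⟩ := by rw [h2]
    rw [extract_entry, extract_entry] at h3
    exact h3
  have he_add : ∀ x y : ℂ, e (x + y) = e x + e y := by
    intro x y
    have hYmem : ((1 : Matrix (Fin n) (Fin n) ℂ) + (x + y) • jordanS n
        + (x * y) • (jordanS n ^ 2)) ∈ toeplitzUpper n :=
      mem_add (mem_add mem_one (mem_smul _ mem_S)) (mem_smul _ (mem_pow_S 2))
    have hY00 : ((1 : Matrix (Fin n) (Fin n) ℂ) + (x + y) • jordanS n
        + (x * y) • (jordanS n ^ 2)) ⟨0, hn0⟩ ⟨0, hn0⟩ = 1 := by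
      have h2a : (jordanS n ^ 2) ⟨0, hn0⟩ ⟨0, hn0⟩ = 0 := by
        rw [jordanS_pow_apply]; norm_num
      have h1a : jordanS n ⟨0, hn0⟩ ⟨0, hn0⟩ = 0 := by simp [jordanS]
      simp [Matrix.add_apply, Matrix.one_apply, Matrix.smul_apply, h2a, h1a]
    have hY01 : ((1 : Matrix (Fin n) (Fin n) ℂ) + (x + y) • jordanS n
        + (x * y) • (jordanS n ^ 2)) ⟨0, hn0⟩ ⟨1, hn⟩ = x + y := by
      have h2a : (jordanS n ^ 2) ⟨0, hn0⟩ ⟨1, hn⟩ = 0 := by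
        rw [jordanS_pow_apply]; norm_num
      have h1a : jordanS n ⟨0, hn0⟩ ⟨1, hn⟩ = 1 := by simp [jordanS]
      have h0a : ((1 : Matrix (Fin n) (Fin n) ℂ)) ⟨0, hn0⟩ ⟨1, hn⟩ = 0 :=
        Matrix.one_apply_ne (by simp [Fin.ext_iff])
      simp [Matrix.add_apply, Matrix.smul_apply, h2a, h1a, h0a]
    have hphiY := hmul _ (hmem1g x) _ (hmem1g y)
    rw [expand_two] at hphiY
    have l := hE hYmem hY00
    rw [hY01, hphiY, mul_apply_01 hn _ (hrange _ (hmem1g y))] at l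
    rw [hdiag (hmem1g x) (h1gS00 x), hdiag (hmem1g y) (h1gS00 y)] at l
    rw [← l]
    ring
  have he_cont : Continuous e := by
    have hpath : Continuous (fun γ : ℂ => (1 : Matrix (Fin n) (Fin n) ℂ) + γ • jordanS n) :=
      continuous_const.add (continuous_id.smul continuous_const)
    have hcomp : Continuous (fun γ : ℂ => φ (1 + γ • jordanS n)) :=
      hcont.comp_continuous hpath fun γ => hmem1g γ
    exact ((entry_lipschitz ⟨0, hn0⟩ ⟨1, hn⟩).continuous).comp hcomp
  -- real linearity of e
  have he_lin : ∀ z : ℂ, e z = (z.re : ℂ) * e 1 + (z.im : ℂ) * e Complex.I := by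
    intro z
    have hco : ∀ w : ℂ, ((AddMonoidHom.mk' e he_add).toRealLinearMap he_cont) w = e w :=
      fun w => rfl
    have hz : z = z.re • (1 : ℂ) + z.im • Complex.I := by
      simp [Complex.real_smul]
    calc e z = ((AddMonoidHom.mk' e he_add).toRealLinearMap he_cont) z := (hco z).symm
      _ = ((AddMonoidHom.mk' e he_add).toRealLinearMap he_cont)
            (z.re • (1 : ℂ) + z.im • Complex.I) := by rw [← hz]
      _ = z.re • ((AddMonoidHom.mk' e he_add).toRealLinearMap he_cont) 1
            + z.im • ((AddMonoidHom.mk' e he_add).toRealLinearMap he_cont) Complex.I := by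
          rw [map_add, map_smul, map_smul]
      _ = (z.re : ℂ) * e 1 + (z.im : ℂ) * e Complex.I := by
          rw [hco, hco, Complex.real_smul, Complex.real_smul]
  set a : ℂ := (e 1 - Complex.I * e Complex.I) / 2 with hadef
  set b : ℂ := (e 1 + Complex.I * e Complex.I) / 2 with hbdef
  have he_ab : ∀ z : ℂ, e z = a * z + b * (starRingEnd ℂ) z := by
    intro z
    have hzc : (starRingEnd ℂ) z = (z.re : ℂ) - (z.im : ℂ) * Complex.I := by
      apply Complex.ext <;> simp
    have hgoal : ∀ r s : ℝ, (r : ℂ) * e 1 + (s : ℂ) * e Complex.I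
        = a * ((r : ℂ) + (s : ℂ) * Complex.I) + b * ((r : ℂ) - (s : ℂ) * Complex.I) := by
      intro r s
      rw [hadef, hbdef]
      linear_combination (s : ℂ) * e Complex.I * Complex.I_sq
    calc e z = (z.re : ℂ) * e 1 + (z.im : ℂ) * e Complex.I := he_lin z
      _ = a * ((z.re : ℂ) + (z.im : ℂ) * Complex.I)
            + b * ((z.re : ℂ) - (z.im : ℂ) * Complex.I) := hgoal z.re z.im
      _ = a * z + b * (starRingEnd ℂ) z := by rw [z.re_add_im, ← hzc]
  -- the key limit
  have hkey : ∀ β : ℂ, Tendsto (fun α : ℂ => c α * e (β / α)) (𝓝[≠] (0 : ℂ))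
      (𝓝 (φ (β • jordanS n) ⟨0, hn0⟩ ⟨1, hn⟩)) := by
    intro β
    have hmemp : ∀ α : ℂ, (α • (1 : Matrix (Fin n) (Fin n) ℂ) + β • jordanS n) ∈ toeplitzUpper n :=
      fun α => mem_add (mem_smul _ mem_one) (mem_smul _ mem_S)
    have hpc : Continuous (fun α : ℂ => α • (1 : Matrix (Fin n) (Fin n) ℂ) + β • jordanS n) :=
      (continuous_id.smul continuous_const).add continuous_const
    have hp0 : Tendsto (fun α : ℂ => α • (1 : Matrix (Fin n) (Fin n) ℂ) + β • jordanS n)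
        (𝓝[≠] 0) (𝓝[toeplitzUpper n] (β • jordanS n)) := by
      rw [tendsto_nhdsWithin_iff]
      constructor
      · have h := hpc.tendsto 0
        simp only [zero_smul, zero_add] at h
        exact h.mono_left nhdsWithin_le_nhds
      · exact Eventually.of_forall fun α => hmemp α
    have hφt : Tendsto (fun α : ℂ => φ (α • (1 : Matrix (Fin n) (Fin n) ℂ) + β • jordanS n))
        (𝓝[≠] 0) (𝓝 (φ (β • jordanS n))) :=
      ((hcont _ (mem_smul _ mem_S)).tendsto).comp hp0
    have hent : Tendsto (fun α : ℂ =>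
        φ (α • (1 : Matrix (Fin n) (Fin n) ℂ) + β • jordanS n) ⟨0, hn0⟩ ⟨1, hn⟩)
        (𝓝[≠] 0) (𝓝 (φ (β • jordanS n) ⟨0, hn0⟩ ⟨1, hn⟩)) :=
      (((entry_lipschitz (⟨0, hn0⟩ : Fin n) ⟨1, hn⟩).continuous).tendsto _).comp hφt
    refine Tendsto.congr' ?_ hent
    filter_upwards [self_mem_nhdsWithin] with α hα
    have hα' : α ≠ 0 := hα
    have harg : α • (1 : Matrix (Fin n) (Fin n) ℂ) + β • jordanS n
        = α • ((1 : Matrix (Fin n) (Fin n) ℂ) + (β / α) • jordanS n) := by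
      rw [smul_add, smul_smul, mul_div_cancel₀ _ hα']
    rw [harg, hphismul α (hmem1g _), Matrix.smul_apply, smul_eq_mul]
  -- endpoint values
  have hval1 : φ ((1 : ℂ) • jordanS n) ⟨0, hn0⟩ ⟨1, hn⟩ = 1 := by
    rw [one_smul, hS]
    simp [jordanS]
  have hvalI : φ (Complex.I • jordanS n) ⟨0, hn0⟩ ⟨1, hn⟩ = c Complex.I := by
    rw [hphismul _ mem_S, hS, Matrix.smul_apply, smul_eq_mul]
    simp [jordanS]
  set u : ℂ → ℂ := fun α => c α / α with hudef
  set v : ℂ → ℂ := fun α => c α / (starRingEnd ℂ) α with hvdef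
  have T1 : Tendsto (fun α : ℂ => a * u α + b * v α) (𝓝[≠] (0 : ℂ)) (𝓝 1) := by
    have h := hkey 1
    rw [hval1] at h
    refine Tendsto.congr' ?_ h
    filter_upwards [self_mem_nhdsWithin] with α hα
    have hα' : (α : ℂ) ≠ 0 := hα
    have hα'' : (starRingEnd ℂ) α ≠ 0 := by simpa using hα'
    rw [he_ab, map_div₀, map_one]
    simp only [hudef, hvdef]
    ring
  have T2 : Tendsto (fun α : ℂ => a * u α - b * v α) (𝓝[≠] (0 : ℂ))
      (𝓝 (-Complex.I * c Complex.I)) := by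
    have h := hkey Complex.I
    rw [hvalI] at h
    have h2 : Tendsto (fun α : ℂ => Complex.I * (a * u α - b * v α)) (𝓝[≠] (0 : ℂ))
        (𝓝 (c Complex.I)) := by
      refine Tendsto.congr' ?_ h
      filter_upwards [self_mem_nhdsWithin] with α hα
      have hα' : (α : ℂ) ≠ 0 := hα
      have hα'' : (starRingEnd ℂ) α ≠ 0 := by simpa using hα'
      rw [he_ab, map_div₀, Complex.conj_I]
      simp only [hudef, hvdef]
      ring
    have h3 := h2.const_mul (-Complex.I)
    refine Tendsto.congr ?_ h3
    intro α
    have := Complex.I_mul_I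
    linear_combination (-(a * u α - b * v α)) * this
  have w : ℂ := -Complex.I * c Complex.I
  have Tu : Tendsto (fun α : ℂ => a * u α) (𝓝[≠] (0 : ℂ))
      (𝓝 ((1 + -Complex.I * c Complex.I) / 2)) := by
    have h := (T1.add T2).const_mul ((2 : ℂ)⁻¹)
    have heq : ∀ α : ℂ, (2 : ℂ)⁻¹ * ((a * u α + b * v α) + (a * u α - b * v α)) = a * u α := by
      intro α; ring
    have hlim : (2 : ℂ)⁻¹ * (1 + -Complex.I * c Complex.I)
        = (1 + -Complex.I * c Complex.I) / 2 := by ring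
    rw [hlim] at h
    exact Tendsto.congr heq h
  have Tv : Tendsto (fun α : ℂ => b * v α) (𝓝[≠] (0 : ℂ))
      (𝓝 ((1 - -Complex.I * c Complex.I) / 2)) := by
    have h := (T1.sub T2).const_mul ((2 : ℂ)⁻¹)
    have heq : ∀ α : ℂ, (2 : ℂ)⁻¹ * ((a * u α + b * v α) - (a * u α - b * v α)) = b * v α := by
      intro α; ring
    have hlim : (2 : ℂ)⁻¹ * (1 - -Complex.I * c Complex.I)
        = (1 - -Complex.I * c Complex.I) / 2 := by ring
    rw [hlim] at h
    exact Tendsto.congr heq h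
  haveI hNB : (𝓝[≠] (0 : ℂ)).NeBot := NormedField.nhdsNE_neBot (0 : ℂ)
  -- generic limit argument
  have main : ∀ (g : ℂ → ℂ) (L : ℂ), (∀ α : ℂ, α ≠ 0 → ‖g α‖ = 1) →
      (∀ x y : ℂ, x ≠ 0 → y ≠ 0 → g (x * y) = g x * g y) →
      Tendsto g (𝓝[≠] (0 : ℂ)) (𝓝 L) → ∀ α : ℂ, α ≠ 0 → g α = 1 := by
    intro g L habs hgmul hlim α hα
    have hLabs : ‖L‖ = 1 := by
      have h1 : Tendsto (fun x : ℂ => ‖g x‖) (𝓝[≠] (0 : ℂ)) (𝓝 ‖L‖) := hlim.norm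
      have h2 : Tendsto (fun x : ℂ => ‖g x‖) (𝓝[≠] (0 : ℂ)) (𝓝 1) := by
        refine Tendsto.congr' ?_ tendsto_const_nhds
        filter_upwards [self_mem_nhdsWithin] with x hx
        exact (habs x hx).symm
      exact tendsto_nhds_unique h1 h2
    have hL0 : L ≠ 0 := by
      intro h
      rw [h, norm_zero] at hLabs
      exact one_ne_zero hLabs.symm
    have hmap : Tendsto (fun x : ℂ => α * x) (𝓝[≠] (0 : ℂ)) (𝓝[≠] (0 : ℂ)) := by
      rw [tendsto_nhdsWithin_iff]
      constructor
      · have h : Tendsto (fun x : ℂ => α * x) (𝓝 0) (𝓝 (α * 0)) :=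
          (continuous_const.mul continuous_id).tendsto 0
        rw [mul_zero] at h
        exact h.mono_left nhdsWithin_le_nhds
      · filter_upwards [self_mem_nhdsWithin] with x hx
        exact mul_ne_zero hα hx
    have h3 : Tendsto (fun x : ℂ => g (α * x)) (𝓝[≠] (0 : ℂ)) (𝓝 L) := hlim.comp hmap
    have h4 : Tendsto (fun x : ℂ => g α * g x) (𝓝[≠] (0 : ℂ)) (𝓝 (g α * L)) :=
      hlim.const_mul _
    have h5 : Tendsto (fun x : ℂ => g (α * x)) (𝓝[≠] (0 : ℂ)) (𝓝 (g α * L)) := by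
      refine Tendsto.congr' ?_ h4
      filter_upwards [self_mem_nhdsWithin] with x hx
      exact (hgmul α x hα hx).symm
    have h6 : L = g α * L := tendsto_nhds_unique h3 h5
    have h7 : g α * L = 1 * L := by rw [one_mul, ← h6]
    exact mul_right_cancel₀ hL0 h7
  have hu_abs : ∀ α : ℂ, α ≠ 0 → ‖u α‖ = 1 := by
    intro α hα
    rw [hudef]
    simp only
    rw [norm_div, hc_abs, div_self (norm_ne_zero_iff.mpr hα)]
  have hv_abs : ∀ α : ℂ, α ≠ 0 → ‖v α‖ = 1 := by
    intro α hα
    rw [hvdef]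
    simp only
    rw [norm_div, hc_abs, RCLike.norm_conj, div_self (norm_ne_zero_iff.mpr hα)]
  have hu_mul : ∀ x y : ℂ, x ≠ 0 → y ≠ 0 → u (x * y) = u x * u y := by
    intro x y hx hy
    simp only [hudef, hc_mul]
    field_simp
  have hv_mul : ∀ x y : ℂ, x ≠ 0 → y ≠ 0 → v (x * y) = v x * v y := by
    intro x y hx hy
    simp only [hvdef, hc_mul, map_mul]
    have hx' : (starRingEnd ℂ) x ≠ 0 := by simpa using hx
    have hy' : (starRingEnd ℂ) y ≠ 0 := by simpa using hy
    field_simp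
  by_cases ha : a = 0
  · -- conjugate-linear case
    have T1' : Tendsto (fun α : ℂ => b * v α) (𝓝[≠] (0 : ℂ)) (𝓝 1) := by
      refine Tendsto.congr ?_ T1
      intro α
      rw [ha, zero_mul, zero_add]
    have hb : b ≠ 0 := by
      intro hb
      have h : Tendsto (fun α : ℂ => (0 : ℂ)) (𝓝[≠] (0 : ℂ)) (𝓝 1) := by
        refine Tendsto.congr ?_ T1'
        intro α
        rw [hb, zero_mul]
      exact one_ne_zero (tendsto_nhds_unique h tendsto_const_nhds)
    have hv_lim : Tendsto v (𝓝[≠] (0 : ℂ)) (𝓝 b⁻¹) := by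
      have h := T1'.const_mul (b⁻¹ : ℂ)
      rw [mul_one] at h
      refine Tendsto.congr ?_ h
      intro α
      field_simp
    have hv1 := main v b⁻¹ hv_abs hv_mul hv_lim
    right
    intro α A hA
    rcases eq_or_ne α 0 with rfl | hα
    · rw [zero_smul, hφ0, map_zero, zero_smul]
    · rw [hphismul α hA]
      have hconj : (starRingEnd ℂ) α ≠ 0 := by simpa using hα
      have hv := hv1 α hα
      rw [hvdef] at hv
      simp only at hv
      have : c α = (starRingEnd ℂ) α := by
        field_simp at hv
        exact hv
      rw [this]
  · -- linear case
    have hu_lim : Tendsto u (𝓝[≠] (0 : ℂ))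
        (𝓝 (a⁻¹ * ((1 + -Complex.I * c Complex.I) / 2))) := by
      have h := Tu.const_mul (a⁻¹ : ℂ)
      refine Tendsto.congr ?_ h
      intro α
      field_simp
    have hu1 := main u _ hu_abs hu_mul hu_lim
    left
    intro α A hA
    rcases eq_or_ne α 0 with rfl | hα
    · rw [zero_smul, hφ0, zero_smul]
    · rw [hphismul α hA]
      have hu := hu1 α hα
      rw [hudef] at hu
      simp only at hu
      have : c α = α := by
        field_simp at hu
        exact hu
      rw [this]
end
end

section
/- Let ℒ be a linear subspace of Mₙ(ℂ) containing the identity matrix and let φ : ℒ → Mₙ(ℂ) be a unital linear isometry (linear with φ(I) = I and ‖φ(R)‖ = ‖R‖ for all R ∈ ℒ). Then φ preserves the numerical range: for every R ∈ ℒ, W(φ(R)) = W(R), where W(T) = { ⟨Tξ, ξ⟩ : ξ ∈ ℂⁿ, ‖ξ‖ = 1 }. -/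
open scoped Matrix Matrix.Norms.L2Operator

set_option maxHeartbeats 2000000

noncomputable section

/-- The numerical range `W(T) = { ⟨Tξ, ξ⟩ : ξ ∈ ℂⁿ, ‖ξ‖ = 1 }` of an `n × n` complex matrix. -/
def numericalRange {n : ℕ} (T : Matrix (Fin n) (Fin n) ℂ) : Set ℂ :=
  {z | ∃ ξ : EuclideanSpace ℂ (Fin n), ‖ξ‖ = 1 ∧ z = inner ℂ ξ (Matrix.toEuclideanLin T ξ)}

variable {n : ℕ}

def wr (T : EuclideanSpace ℂ (Fin n) →L[ℂ] EuclideanSpace ℂ (Fin n)) : Set ℂ :=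
  {z | ∃ ξ : EuclideanSpace ℂ (Fin n), ‖ξ‖ = 1 ∧ z = inner ℂ ξ (T ξ)}

lemma wr_core (T : EuclideanSpace ℂ (Fin n) →L[ℂ] EuclideanSpace ℂ (Fin n))
    (x y : EuclideanSpace ℂ (Fin n)) (hx : ‖x‖ = 1) (hy : ‖y‖ = 1)
    (hxT : (inner ℂ x (T x) : ℂ) = 0) (hyT : (inner ℂ y (T y) : ℂ) = 1) :
    ∀ t ∈ Set.Icc (0:ℝ) 1, (t : ℂ) ∈ wr T := by
  intro t ht
  classical
  set p : ℂ := inner ℂ x (T y) with hp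
  set q : ℂ := inner ℂ y (T x) with hq
  set c : ℂ := q - (starRingEnd ℂ) p with hc
  set w : ℂ := if c = 0 then 1 else (starRingEnd ℂ) c / ‖c‖ with hw
  have hwnorm : ‖w‖ = 1 := by
    rw [hw]
    split_ifs with h
    · simp
    · rw [norm_div]
      rw [RCLike.norm_conj]
      rw [Complex.norm_real, Real.norm_of_nonneg (norm_nonneg c)]
      exact div_self (norm_ne_zero_iff.mpr h)
  have hwc : (w * c).im = 0 := by
    rw [hw]
    split_ifs with h
    · simp [h]
    · rw [div_mul_eq_mul_div, ← Complex.normSq_eq_conj_mul_self]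
      simp [Complex.div_im]
  set x' : EuclideanSpace ℂ (Fin n) := w • x with hx'def
  have hx'norm : ‖x'‖ = 1 := by rw [hx'def, norm_smul, hwnorm, hx, mul_one]
  have hx'T : (inner ℂ x' (T x') : ℂ) = 0 := by
    rw [hx'def, map_smul, inner_smul_left, inner_smul_right, hxT]
    ring
  set cross : ℂ := (starRingEnd ℂ) w * p + w * q with hcross
  have hcross_im : cross.im = 0 := by
    have : cross.im = (w * c).im := by
      rw [hcross, hc]
      simp [Complex.add_im, Complex.mul_im, Complex.sub_im, Complex.sub_re]
      ring
    rw [this, hwc]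
  set u : ℝ → EuclideanSpace ℂ (Fin n) := fun s => ((s:ℂ)) • x' + (((1-s:ℝ):ℂ)) • y with hu
  set val : ℝ → ℂ := fun s => inner ℂ (u s) (T (u s)) with hval
  have hvals : ∀ s : ℝ, val s = (((1-s)^2 : ℝ):ℂ) + ((s*(1-s) : ℝ):ℂ) * cross := by
    intro s
    have hTx'y : (inner ℂ x' (T y) : ℂ) = (starRingEnd ℂ) w * p := by
      rw [hx'def, inner_smul_left, hp]
    have hTyx' : (inner ℂ y (T x') : ℂ) = w * q := by
      rw [hx'def, map_smul, inner_smul_right, hq]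
    rw [hval]
    simp only [hu, map_add, map_smul, inner_add_left, inner_add_right, inner_smul_left,
      inner_smul_right, hx'T, hyT, hTx'y, hTyx', Complex.conj_ofReal]
    rw [hcross]
    push_cast
    ring
  have him : ∀ s : ℝ, (val s).im = 0 := by
    intro s
    rw [hvals s, Complex.add_im, Complex.mul_im, Complex.ofReal_im, Complex.ofReal_re,
      Complex.ofReal_im, hcross_im]
    ring
  have hu0 : u 0 = y := by simp [hu]
  have hu1 : u 1 = x' := by simp [hu]
  have hune : ∀ s : ℝ, u s ≠ 0 := by
    intro s h0
    have h1 : (((1-s:ℝ):ℂ)) • y = -((s:ℂ) • x') := eq_neg_of_add_eq_zero_right h0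
    have h2 : (inner ℂ ((((1-s:ℝ):ℂ)) • y) (T ((((1-s:ℝ):ℂ)) • y)) : ℂ) = (((1-s)^2:ℝ):ℂ) := by
      rw [map_smul, inner_smul_left, inner_smul_right, hyT, Complex.conj_ofReal]
      push_cast; ring
    have h3 : (inner ℂ ((((1-s:ℝ):ℂ)) • y) (T ((((1-s:ℝ):ℂ)) • y)) : ℂ) = 0 := by
      rw [h1, map_neg, inner_neg_neg, map_smul, inner_smul_left, inner_smul_right, hx'T]
      ring
    rw [h2] at h3
    have h4 : (1-s)^2 = 0 := by exact_mod_cast h3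
    have h5 : s = 1 := by nlinarith [sq_nonneg (1-s)]
    subst h5
    have hx0 : x' = 0 := by simpa using h1.symm
    rw [hx0] at hx'norm
    simp at hx'norm
  set F : ℝ → ℝ := fun s => (val s).re / ‖u s‖^2 with hF
  have hucont : Continuous u := by
    rw [hu]; fun_prop
  have hvalcont : Continuous val := by
    rw [hval]
    exact Continuous.inner hucont (T.continuous.comp hucont)
  have hFcont : Continuous F := by
    rw [hF]
    apply Continuous.div (Complex.continuous_re.comp hvalcont) (by fun_prop)
    intro s
    exact pow_ne_zero 2 (norm_ne_zero_iff.mpr (hune s))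
  have hF0 : F 0 = 1 := by
    rw [hF]
    simp only [hval, hu0, hyT, hy]
    norm_num
  have hF1 : F 1 = 0 := by
    rw [hF]
    simp only [hval, hu1, hx'T]
    norm_num
  have hIVT : t ∈ F '' Set.Icc (0:ℝ) 1 := by
    apply intermediate_value_Icc' (by norm_num : (0:ℝ) ≤ 1) hFcont.continuousOn
    rw [hF1, hF0]; exact ht
  obtain ⟨s, _, hs⟩ := hIVT
  refine ⟨((‖u s‖⁻¹ : ℝ):ℂ) • u s, ?_, ?_⟩
  · rw [norm_smul]
    simp [norm_ne_zero_iff.mpr (hune s)]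
  · have hinner : (inner ℂ (((‖u s‖⁻¹ : ℝ):ℂ) • u s) (T ((((‖u s‖⁻¹ : ℝ):ℂ)) • u s)) : ℂ)
        = (((‖u s‖⁻¹)^2 : ℝ):ℂ) * val s := by
      rw [map_smul, inner_smul_left, inner_smul_right, Complex.conj_ofReal, hval]
      push_cast; ring
    rw [hinner]
    apply Complex.ext
    · simp only [Complex.mul_re, Complex.ofReal_re, Complex.ofReal_im, zero_mul, sub_zero]
      rw [← hs, hF]
      have hns : ‖u s‖ ≠ 0 := norm_ne_zero_iff.mpr (hune s)
      field_simp
    · rw [Complex.mul_im, Complex.ofReal_im, Complex.ofReal_im, him s]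
      ring

lemma wr_convex (T : EuclideanSpace ℂ (Fin n) →L[ℂ] EuclideanSpace ℂ (Fin n)) :
    Convex ℝ (wr T) := by
  intro a ha b hb t1 t2 ht1 ht2 hsum
  by_cases hab : a = b
  · subst hab
    have : t1 • a + t2 • a = a := by rw [← add_smul, hsum, one_smul]
    rw [this]; exact ha
  · obtain ⟨x, hx, hax⟩ := ha
    obtain ⟨y, hy, hby⟩ := hb
    set T' := (b - a)⁻¹ • (T - a • 1) with hT'
    have hbne : b - a ≠ 0 := sub_ne_zero.mpr (Ne.symm hab)
    have key : ∀ ξ : EuclideanSpace ℂ (Fin n), ‖ξ‖ = 1 →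
        (inner ℂ ξ (T' ξ) : ℂ) = (b-a)⁻¹ * ((inner ℂ ξ (T ξ)) - a) := by
      intro ξ hξ
      rw [hT']
      simp only [ContinuousLinearMap.smul_apply, ContinuousLinearMap.sub_apply,
        ContinuousLinearMap.one_apply, inner_smul_right, inner_sub_right]
      rw [inner_self_eq_norm_sq_to_K, hξ]
      push_cast; ring
    have hx0 : (inner ℂ x (T' x) : ℂ) = 0 := by rw [key x hx, ← hax]; simp
    have hy1 : (inner ℂ y (T' y) : ℂ) = 1 := by
      rw [key y hy, ← hby]
      field_simp
    obtain ⟨ξ, hξ, hval⟩ := wr_core T' x y hx hy hx0 hy1 t2 ⟨ht2, by linarith⟩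
    refine ⟨ξ, hξ, ?_⟩
    have h2 := key ξ hξ
    rw [← hval] at h2
    have h3 : (t2:ℂ) * (b - a) = inner ℂ ξ (T ξ) - a := by
      rw [h2]; field_simp
    have ht1c : (t1:ℂ) = 1 - (t2:ℂ) := by
      have : t1 = 1 - t2 := by linarith
      rw [this]; push_cast; ring
    rw [Complex.real_smul, Complex.real_smul, ht1c]
    linear_combination h3

lemma wr_closed (T : EuclideanSpace ℂ (Fin n) →L[ℂ] EuclideanSpace ℂ (Fin n)) :
    IsClosed (wr T) := by
  have himg : wr T = (fun ξ : EuclideanSpace ℂ (Fin n) => (inner ℂ ξ (T ξ) : ℂ)) ''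
      Metric.sphere 0 1 := by
    ext z
    simp only [wr, Set.mem_setOf_eq, Set.mem_image, mem_sphere_zero_iff_norm]
    constructor
    · rintro ⟨ξ, h1, h2⟩; exact ⟨ξ, h1, h2.symm⟩
    · rintro ⟨ξ, h1, h2⟩; exact ⟨ξ, h1, h2.symm⟩
  rw [himg]
  exact ((isCompact_sphere 0 1).image
    (Continuous.inner continuous_id (T.continuous.comp continuous_id))).isClosed

lemma wr_ge (T : EuclideanSpace ℂ (Fin n) →L[ℂ] EuclideanSpace ℂ (Fin n))
    (hne : ∃ ξ : EuclideanSpace ℂ (Fin n), ‖ξ‖ = 1) {z : ℂ}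
    (h : ∀ lam : ℂ, ‖z - lam‖ ≤ ‖T - lam • 1‖) : z ∈ wr T := by
  by_contra hz
  obtain ⟨f, u0, hfW, hfz⟩ := geometric_hahn_banach_closed_point (wr_convex T) (wr_closed T) hz
  set c : ℂ := ((f 1 : ℝ) : ℂ) + ((f Complex.I : ℝ) : ℂ) * Complex.I with hcdef
  have hcre : c.re = f 1 := by simp [hcdef]
  have hcim : c.im = f Complex.I := by simp [hcdef]
  have hfrep : ∀ w : ℂ, f w = ((starRingEnd ℂ) c * w).re := by
    intro w
    have hw : w = w.re • (1:ℂ) + w.im • Complex.I := by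
      simp [Complex.real_smul, Complex.re_add_im]
    conv_lhs => rw [hw]
    rw [map_add, map_smul, map_smul]
    simp only [smul_eq_mul, Complex.mul_re, Complex.conj_re, Complex.conj_im, hcre, hcim]
    ring
  obtain ⟨ξ0, hξ0⟩ := hne
  have hw0 : (inner ℂ ξ0 (T ξ0) : ℂ) ∈ wr T := ⟨ξ0, hξ0, rfl⟩
  have hcne : c ≠ 0 := by
    intro hc0
    have h1 : f (inner ℂ ξ0 (T ξ0) : ℂ) = 0 := by rw [hfrep, hc0]; simp
    have h2 : f z = 0 := by rw [hfrep, hc0]; simp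
    have h3 := hfW _ hw0
    rw [h1] at h3
    linarith
  set d : ℂ := c / (‖c‖ : ℂ) with hddef
  have hcnorm : (0:ℝ) < ‖c‖ := norm_pos_iff.mpr hcne
  have hdnorm : ‖d‖ = 1 := by
    rw [hddef, norm_div, Complex.norm_real, Real.norm_of_nonneg (norm_nonneg c)]
    exact div_self (ne_of_gt hcnorm)
  set δ : ℝ := (f z - u0) / ‖c‖ with hδdef
  have hδpos : 0 < δ := div_pos (by linarith) hcnorm
  set S : EuclideanSpace ℂ (Fin n) →L[ℂ] EuclideanSpace ℂ (Fin n) :=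
    (starRingEnd ℂ) d • (T - z • 1) with hSdef
  have hSval : ∀ ξ : EuclideanSpace ℂ (Fin n), ‖ξ‖ = 1 →
      (inner ℂ ξ (S ξ) : ℂ) = (starRingEnd ℂ) d * ((inner ℂ ξ (T ξ)) - z) := by
    intro ξ hξ
    rw [hSdef]
    simp only [ContinuousLinearMap.smul_apply, ContinuousLinearMap.sub_apply,
      ContinuousLinearMap.one_apply, inner_smul_right, inner_sub_right]
    rw [inner_self_eq_norm_sq_to_K, hξ]
    push_cast; ring
  have hSre : ∀ ξ : EuclideanSpace ℂ (Fin n), ‖ξ‖ = 1 → (inner ℂ ξ (S ξ) : ℂ).re ≤ -δ := by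
    intro ξ hξ
    rw [hSval ξ hξ]
    have hfw := hfW _ (⟨ξ, hξ, rfl⟩ : (inner ℂ ξ (T ξ) : ℂ) ∈ wr T)
    have hkey : (starRingEnd ℂ) d * ((inner ℂ ξ (T ξ) : ℂ) - z)
        = ((starRingEnd ℂ) c * (inner ℂ ξ (T ξ) : ℂ) - (starRingEnd ℂ) c * z) / (‖c‖:ℂ) := by
      rw [hddef, map_div₀, Complex.conj_ofReal]
      ring
    rw [hkey, Complex.div_ofReal_re, Complex.sub_re, ← hfrep, ← hfrep]
    rw [hδdef, neg_div']
    apply div_le_div_of_nonneg_right (by linarith) (le_of_lt hcnorm) |>.trans_eq rfl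
  have hδS : δ ≤ ‖S‖ := by
    have h1 := hSre ξ0 hξ0
    have h3 : ‖(inner ℂ ξ0 (S ξ0) : ℂ)‖ ≤ ‖S‖ := by
      calc ‖(inner ℂ ξ0 (S ξ0) : ℂ)‖ ≤ ‖ξ0‖ * ‖S ξ0‖ := norm_inner_le_norm _ _
        _ ≤ ‖ξ0‖ * (‖S‖ * ‖ξ0‖) := by gcongr; exact S.le_opNorm ξ0
        _ = ‖S‖ := by rw [hξ0]; ring
    have h2 : |(inner ℂ ξ0 (S ξ0) : ℂ).re| ≤ ‖(inner ℂ ξ0 (S ξ0) : ℂ)‖ := Complex.abs_re_le_norm _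
    have := neg_abs_le ((inner ℂ ξ0 (S ξ0) : ℂ).re)
    linarith [abs_le.mp (le_trans h2 h3)]
  set r : ℝ := (‖S‖^2 + δ^2)/(2*δ) with hrdef
  have hrpos : 0 < r := by
    rw [hrdef]; positivity
  have hrδ : δ ≤ r := by
    rw [hrdef, le_div_iff₀ (by positivity)]; nlinarith
  have h2rδ : 2*r*δ = ‖S‖^2 + δ^2 := by
    have hh : 2*((‖S‖^2 + δ^2)/(2*δ))*δ = (‖S‖^2 + δ^2) * ((2*δ)/(2*δ)) := by ring
    rw [hrdef, hh, div_self (ne_of_gt (by positivity : (0:ℝ) < 2*δ)), mul_one]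
  have hRe : ∀ ξ : EuclideanSpace ℂ (Fin n), (inner ℂ ξ (S ξ) : ℂ).re ≤ -δ * ‖ξ‖^2 := by
    intro ξ
    by_cases hξ : ξ = 0
    · simp [hξ]
    · have hnz : (0:ℝ) < ‖ξ‖ := norm_pos_iff.mpr hξ
      have hun : ‖((‖ξ‖⁻¹:ℝ):ℂ) • ξ‖ = 1 := by
        rw [norm_smul, Complex.norm_real, Real.norm_of_nonneg (by positivity)]
        field_simp
      have h1 := hSre _ hun
      have h2 : (inner ℂ (((‖ξ‖⁻¹:ℝ):ℂ) • ξ) (S (((‖ξ‖⁻¹:ℝ):ℂ) • ξ)) : ℂ)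
          = (((‖ξ‖⁻¹)^2:ℝ):ℂ) * inner ℂ ξ (S ξ) := by
        rw [map_smul, inner_smul_left, inner_smul_right, Complex.conj_ofReal]
        push_cast; ring
      rw [h2] at h1
      have h3 : ((((‖ξ‖⁻¹)^2:ℝ):ℂ) * (inner ℂ ξ (S ξ) : ℂ)).re
          = (‖ξ‖⁻¹)^2 * (inner ℂ ξ (S ξ) : ℂ).re := Complex.re_ofReal_mul _ _
      rw [h3] at h1
      have h4 : (‖ξ‖⁻¹)^2 = (‖ξ‖^2)⁻¹ := by rw [inv_pow]
      rw [h4] at h1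
      have h5 : (0:ℝ) < ‖ξ‖^2 := by positivity
      have h6 : ((‖ξ‖^2)⁻¹ * (inner ℂ ξ (S ξ) : ℂ).re) * ‖ξ‖^2 = (inner ℂ ξ (S ξ) : ℂ).re := by
        field_simp
      calc (inner ℂ ξ (S ξ) : ℂ).re = ((‖ξ‖^2)⁻¹ * (inner ℂ ξ (S ξ) : ℂ).re) * ‖ξ‖^2 := h6.symm
        _ ≤ -δ * ‖ξ‖^2 := by nlinarith
  have hr2δ2 : (0:ℝ) ≤ r^2 - δ^2 := by nlinarith
  have hbound : ‖S + (r:ℂ) • 1‖ ≤ Real.sqrt (r^2 - δ^2) := by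
    apply ContinuousLinearMap.opNorm_le_bound _ (Real.sqrt_nonneg _)
    intro ξ
    have happ : (S + (r:ℂ) • 1) ξ = S ξ + (r:ℂ) • ξ := by
      simp
    have hexp : ‖(S + (r:ℂ) • 1) ξ‖^2
        = ‖S ξ‖^2 + 2*(r * (inner ℂ ξ (S ξ) : ℂ).re) + r^2*‖ξ‖^2 := by
      rw [happ, @norm_add_sq ℂ _ _ _ _ (S ξ) ((r:ℂ) • ξ), inner_smul_right]
      rw [norm_smul, Complex.norm_real, Real.norm_of_nonneg hrpos.le]
      have : RCLike.re ((r:ℂ) * (inner ℂ (S ξ) ξ : ℂ)) = r * (inner ℂ ξ (S ξ) : ℂ).re := by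
        rw [RCLike.re_to_complex, Complex.mul_re, Complex.ofReal_re, Complex.ofReal_im]
        have := inner_re_symm (𝕜 := ℂ) (S ξ) ξ
        rw [RCLike.re_to_complex, RCLike.re_to_complex] at this
        rw [this]; ring
      rw [this]; ring
    have hsq : ‖(S + (r:ℂ) • 1) ξ‖^2 ≤ (r^2 - δ^2) * ‖ξ‖^2 := by
      rw [hexp]
      have h1 : ‖S ξ‖^2 ≤ ‖S‖^2 * ‖ξ‖^2 := by
        have := S.le_opNorm ξ
        nlinarith [norm_nonneg (S ξ), norm_nonneg ξ, S.opNorm_nonneg]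
      have h2 := hRe ξ
      nlinarith
    have := Real.sqrt_le_sqrt hsq
    rw [Real.sqrt_sq (norm_nonneg _), Real.sqrt_mul hr2δ2, Real.sqrt_sq (norm_nonneg _)] at this
    exact this
  have hsqrtlt : Real.sqrt (r^2 - δ^2) < r := by
    rw [Real.sqrt_lt' hrpos]
    nlinarith
  have hdd : d * (starRingEnd ℂ) d = 1 := by
    rw [Complex.mul_conj]
    have habs : ‖d‖ = 1 := hdnorm
    rw [← Complex.sq_norm, habs]
    norm_num
  set lam : ℂ := z - (r:ℂ) * d with hlam
  have hfact : T - lam • 1 = d • (S + (r:ℂ) • 1) := by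
    rw [hSdef, smul_add, smul_smul, hdd, one_smul, smul_smul, hlam]
    module
  have hnormfact : ‖T - lam • 1‖ = ‖S + (r:ℂ) • 1‖ := by
    rw [hfact, norm_smul d (S + (r:ℂ) • 1), hdnorm, one_mul]
  have hzlam : ‖z - lam‖ = r := by
    rw [hlam]
    simp only [sub_sub_cancel]
    rw [norm_mul, hdnorm, Complex.norm_real, Real.norm_of_nonneg hrpos.le, mul_one]
  have hcon := h lam
  rw [hzlam, hnormfact] at hcon
  linarith


-- easy direction
lemma wr_le (T : EuclideanSpace ℂ (Fin n) →L[ℂ] EuclideanSpace ℂ (Fin n)) {z : ℂ}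
    (hz : z ∈ wr T) (lam : ℂ) : ‖z - lam‖ ≤ ‖T - lam • 1‖ := by
  obtain ⟨ξ, hξ, rfl⟩ := hz
  have h1 : (inner ℂ ξ (T ξ) : ℂ) - lam = inner ℂ ξ ((T - lam • 1) ξ) := by
    simp only [ContinuousLinearMap.sub_apply, ContinuousLinearMap.smul_apply,
      ContinuousLinearMap.one_apply, inner_sub_right, inner_smul_right,
      inner_self_eq_norm_sq_to_K, hξ]
    push_cast
    ring
  rw [h1]
  calc ‖(inner ℂ ξ ((T - lam • 1) ξ) : ℂ)‖ ≤ ‖ξ‖ * ‖(T - lam • 1) ξ‖ := norm_inner_le_norm _ _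
    _ ≤ ‖ξ‖ * (‖T - lam • 1‖ * ‖ξ‖) := by
        gcongr; exact (T - lam • 1).le_opNorm ξ
    _ = ‖T - lam • 1‖ := by rw [hξ]; ring

lemma wr_eq_disks (T : EuclideanSpace ℂ (Fin n) →L[ℂ] EuclideanSpace ℂ (Fin n))
    (hne : ∃ ξ : EuclideanSpace ℂ (Fin n), ‖ξ‖ = 1) :
    wr T = {z | ∀ lam : ℂ, ‖z - lam‖ ≤ ‖T - lam • 1‖} :=
  Set.Subset.antisymm (fun _ hz lam => wr_le T hz lam) (fun _ hz => wr_ge T hne hz)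

lemma numericalRange_eq_wr (A : Matrix (Fin n) (Fin n) ℂ) :
    numericalRange A = wr (Matrix.toEuclideanCLM (𝕜 := ℂ) A) := by
  have happ : ∀ ξ : EuclideanSpace ℂ (Fin n),
      Matrix.toEuclideanCLM (𝕜 := ℂ) A ξ = Matrix.toEuclideanLin A ξ := by
    intro ξ
    rw [← Matrix.coe_toEuclideanCLM_eq_toEuclideanLin]
    rfl
  ext z
  simp only [numericalRange, wr, Set.mem_setOf_eq]
  constructor <;> rintro ⟨ξ, h1, h2⟩ <;> exact ⟨ξ, h1, by rw [h2, happ]⟩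

theorem stmt9 (n : ℕ) (L : Submodule ℂ (Matrix (Fin n) (Fin n) ℂ))
    (hI : (1 : Matrix (Fin n) (Fin n) ℂ) ∈ L)
    (φ : Matrix (Fin n) (Fin n) ℂ → Matrix (Fin n) (Fin n) ℂ)
    (hadd : ∀ A ∈ L, ∀ B ∈ L, φ (A + B) = φ A + φ B)
    (hsmul : ∀ (c : ℂ), ∀ A ∈ L, φ (c • A) = c • φ A)
    (hone : φ 1 = 1)
    (hnorm : ∀ R ∈ L, ‖φ R‖ = ‖R‖) :
    ∀ R ∈ L, numericalRange (φ R) = numericalRange R := by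
  intro R hR
  rcases Nat.eq_zero_or_pos n with h0 | hpos
  · subst h0
    ext z
    constructor <;> rintro ⟨ξ, hξ, -⟩ <;>
      · exfalso
        rw [Subsingleton.elim ξ 0] at hξ
        simp at hξ
  · have hne : ∃ ξ : EuclideanSpace ℂ (Fin n), ‖ξ‖ = 1 :=
      ⟨EuclideanSpace.single ⟨0, hpos⟩ 1, by rw [EuclideanSpace.norm_single]; norm_num⟩
    have hmem : ∀ lam : ℂ, R - lam • 1 ∈ L := fun lam =>
      Submodule.sub_mem L hR (Submodule.smul_mem L lam hI)
    have hphi : ∀ lam : ℂ, φ (R - lam • 1) = φ R - lam • 1 := by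
      intro lam
      have h1 : R - lam • 1 = R + (-lam) • 1 := by rw [neg_smul, ← sub_eq_add_neg]
      rw [h1, hadd R hR _ (Submodule.smul_mem L _ hI), hsmul _ 1 hI, hone, neg_smul,
        ← sub_eq_add_neg]
    have hnorm' : ∀ lam : ℂ, ‖φ R - lam • 1‖ = ‖R - lam • 1‖ := by
      intro lam
      rw [← hphi]
      exact hnorm _ (hmem lam)
    have hclm : ∀ (A : Matrix (Fin n) (Fin n) ℂ) (lam : ℂ),
        ‖A - lam • 1‖ = ‖Matrix.toEuclideanCLM (𝕜 := ℂ) A - lam • 1‖ := by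
      intro A lam
      rw [Matrix.cstar_norm_def, map_sub, map_smul, map_one]
    rw [numericalRange_eq_wr, numericalRange_eq_wr, wr_eq_disks _ hne, wr_eq_disks _ hne]
    ext z
    simp only [Set.mem_setOf_eq]
    constructor <;> intro hz lam
    · rw [← hclm, ← hnorm' lam, hclm]
      exact hz lam
    · rw [← hclm, hnorm' lam, hclm]
      exact hz lam
end
end

section
/- Let n ≥ 2, let A ∈ M_{n−1}(ℂ), let x, y ∈ ℂ^{n−1}, and let α ∈ ℂ be such that for all λ ≠ 0 the n×n block matrix T(λ) = [[x, A − λI_{n−1}], [α, yᵀ]] (first column x above α, with A − λI_{n−1} above the row vector yᵀ) satisfies rank(T(λ)) = rank(A − λI_{n−1}) = n − 1. Then α = 0, A is nilpotent, and yᵀ A^k x = 0 for all k = 0, 1, …, n−1. -/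
open scoped Matrix

noncomputable section

open Matrix Polynomial

theorem auxIsUnitDet {m : Type*} [Fintype m] [DecidableEq m] (B : Matrix m m ℂ)
    (hB : B.rank = Fintype.card m) : IsUnit B.det := by
  rw [isUnit_iff_ne_zero]
  intro hd
  obtain ⟨v, hv, hBv⟩ := (Matrix.exists_mulVec_eq_zero_iff).mpr hd
  have h1 := LinearMap.finrank_range_add_finrank_ker B.mulVecLin
  have h2 : 0 < Module.finrank ℂ (LinearMap.ker B.mulVecLin) :=
    Module.finrank_pos_iff_exists_ne_zero.mpr
      ⟨⟨v, by simpa [LinearMap.mem_ker] using hBv⟩, by simpa using hv⟩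
  rw [Matrix.rank] at hB
  rw [hB, Module.finrank_pi] at h1
  omega

theorem auxEvalCharpoly {m : Type*} [Fintype m] [DecidableEq m] (A : Matrix m m ℂ) (t : ℂ) :
    (Matrix.charpoly A).eval t = (t • (1 : Matrix m m ℂ) - A).det := by
  rw [Matrix.charpoly, ← Polynomial.coe_evalRingHom, RingHom.map_det]
  congr 1
  ext i j
  by_cases h : i = j <;>
    simp [h, Matrix.charmatrix_apply, Matrix.one_apply, Matrix.diagonal_apply,
      RingHom.mapMatrix_apply]

theorem auxPowEqZero {m : Type*} [Fintype m] [DecidableEq m] (A : Matrix m m ℂ)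
    (h : ∀ t : ℂ, t ≠ 0 → IsUnit (A - t • 1).det) : A ^ (Fintype.card m) = 0 := by
  have hsp : A.charpoly.Splits := IsAlgClosed.splits _
  have hroots : ∀ μ ∈ A.charpoly.roots, μ = 0 := by
    intro μ hμ
    by_contra hμ0
    have h1 : (Matrix.charpoly A).eval μ = 0 := by
      have := Polynomial.isRoot_of_mem_roots hμ
      simpa [Polynomial.IsRoot] using this
    rw [auxEvalCharpoly] at h1
    have h2 : μ • (1 : Matrix m m ℂ) - A = -(A - μ • 1) := by rw [neg_sub]
    rw [h2, Matrix.det_neg] at h1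
    have := (h μ hμ0)
    rw [isUnit_iff_ne_zero] at this
    simp [this] at h1
  have hch : A.charpoly = X ^ (Fintype.card m) := by
    have hm := Matrix.charpoly_monic A
    have heq := hsp.eq_prod_roots_of_monic hm
    have hcard : A.charpoly.roots.card = Fintype.card m := by
      rw [← Matrix.charpoly_natDegree_eq_dim A]
      exact (Polynomial.splits_iff_card_roots.mp hsp)
    calc A.charpoly = (A.charpoly.roots.map fun a => X - C a).prod := heq
      _ = (A.charpoly.roots.map fun _ => (X : ℂ[X])).prod := by
          apply congrArg
          apply Multiset.map_congr rfl
          intro a ha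
          simp [hroots a ha]
      _ = X ^ (Fintype.card m) := by
          rw [Multiset.map_const', Multiset.prod_replicate, hcard]
  have := Matrix.aeval_self_charpoly A
  rwa [hch, map_pow, aeval_X] at this

theorem auxRankSubm {l m n : Type*} [Fintype m] [Fintype n] (A : Matrix l m ℂ) (e : n ≃ m) :
    (A.submatrix id e).rank = A.rank := by
  have hr : LinearMap.range (A.submatrix id e).mulVecLin = LinearMap.range A.mulVecLin := by
    ext w
    simp only [LinearMap.mem_range, Matrix.mulVecLin_apply]
    constructor
    · rintro ⟨v, rfl⟩
      exact ⟨v ∘ e.symm, by rw [Matrix.submatrix_mulVec_equiv]; rfl⟩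
    · rintro ⟨v, rfl⟩
      exact ⟨v ∘ e, by rw [Matrix.submatrix_mulVec_equiv]; simp [Function.comp_def]⟩
  rw [Matrix.rank, Matrix.rank, hr]

theorem auxSchur {m : Type*} [Fintype m] [DecidableEq m] (B : Matrix m m ℂ)
    (x y : m → ℂ) (α : ℂ) (hB : IsUnit B.det)
    (hT : (Matrix.fromBlocks (Matrix.replicateCol (Fin 1) x) B
        (Matrix.of fun _ _ => α) (Matrix.replicateRow (Fin 1) y)).rank = Fintype.card m) :
    α = y ⬝ᵥ B⁻¹.mulVec x := by
  set T := Matrix.fromBlocks (Matrix.replicateCol (Fin 1) x) B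
      (Matrix.of fun _ _ => α) (Matrix.replicateRow (Fin 1) y) with hTdef
  set T' : Matrix (m ⊕ Fin 1) (m ⊕ Fin 1) ℂ :=
    Matrix.fromBlocks B (Matrix.replicateCol (Fin 1) x) (Matrix.replicateRow (Fin 1) y)
      (Matrix.of fun _ _ => α) with hT'def
  have hsub : T.submatrix id ⇑(Equiv.sumComm m (Fin 1)) = T' := by
    have : ⇑(Equiv.sumComm m (Fin 1)) = Sum.swap := rfl
    rw [this, hTdef, hT'def]
    have := Matrix.fromBlocks_submatrix_sum_swap_right (Matrix.replicateCol (Fin 1) x) B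
      (Matrix.of fun _ _ => α) (Matrix.replicateRow (Fin 1) y) (id : m ⊕ Fin 1 → m ⊕ Fin 1)
    simpa using this
  have hrank : T'.rank = Fintype.card m := by
    rw [← hsub, auxRankSubm, hT]
  have hdet : T'.det = 0 := by
    by_contra hd
    have hu : IsUnit T' := (Matrix.isUnit_iff_isUnit_det _).mpr (isUnit_iff_ne_zero.mpr hd)
    have := Matrix.rank_of_isUnit T' hu
    rw [hrank] at this
    simp [Fintype.card_sum] at this
  have : Invertible B := B.invertibleOfIsUnitDet hB
  rw [hT'def, Matrix.det_fromBlocks₁₁] at hdet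
  have hB0 : B.det ≠ 0 := hB.ne_zero
  have h1 : (Matrix.of (fun _ _ => α) - Matrix.replicateRow (Fin 1) y * ⅟B * Matrix.replicateCol (Fin 1) x).det
      = 0 := by
    rcases mul_eq_zero.mp hdet with h | h
    · exact absurd h hB0
    · exact h
  rw [Matrix.det_fin_one] at h1
  have key : (Matrix.replicateRow (Fin 1) y * ⅟B * Matrix.replicateCol (Fin 1) x) 0 0 = y ⬝ᵥ (⅟B).mulVec x := by
    simp only [Matrix.mul_apply, Matrix.replicateRow_apply, Matrix.replicateCol_apply, Matrix.mulVec,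
      dotProduct, Finset.sum_mul, Finset.mul_sum]
    rw [Finset.sum_comm]
    refine Finset.sum_congr rfl fun i _ => Finset.sum_congr rfl fun j _ => by ring
  rw [Matrix.sub_apply, key, Matrix.of_apply, sub_eq_zero, Matrix.invOf_eq_nonsing_inv] at h1
  exact h1

theorem auxDotSum {m : Type*} [Fintype m] (y x : m → ℂ) (s : Finset ℕ) (f : ℕ → Matrix m m ℂ) :
    y ⬝ᵥ (∑ k ∈ s, f k).mulVec x = ∑ k ∈ s, y ⬝ᵥ (f k).mulVec x := by
  classical
  induction s using Finset.induction with
  | empty => simp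
  | insert _ _ hnot ih => simp [Finset.sum_insert hnot, Matrix.add_mulVec, ih]

theorem auxInv {m : Type*} [Fintype m] [DecidableEq m] (A : Matrix m m ℂ) (M : ℕ)
    (hAm : A ^ M = 0) (t : ℂ) (ht : t ≠ 0) :
    (A - t • 1)⁻¹ = -(∑ k ∈ Finset.range M, (t⁻¹)^(k+1) • A ^ k) := by
  apply Matrix.inv_eq_right_inv
  have hg := Finset.sum_range_sub (fun k => (t⁻¹)^k • A ^ k) M
  have expand : (A - t • 1) * (-(∑ k ∈ Finset.range M, (t⁻¹)^(k+1) • A ^ k))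
      = -(∑ k ∈ Finset.range M,
          ((t⁻¹)^(k+1) • A ^ (k+1) - (t⁻¹)^k • A ^ k)) := by
    rw [mul_neg, neg_inj, Finset.mul_sum]
    apply Finset.sum_congr rfl
    intro k _
    have e1 : A * ((t⁻¹)^(k+1) • A ^ k) = (t⁻¹)^(k+1) • A ^ (k+1) := by
      rw [mul_smul_comm, ← pow_succ']
    have e2 : (t • (1 : Matrix m m ℂ)) * ((t⁻¹)^(k+1) • A ^ k) = (t⁻¹)^k • A ^ k := by
      rw [Matrix.smul_mul, Matrix.one_mul, smul_smul]
      congr 1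
      rw [pow_succ', ← mul_assoc, mul_inv_cancel₀ ht, one_mul]
    rw [sub_mul, e1, e2]
  rw [expand, hg]
  simp [hAm]

theorem stmt12 (n : ℕ) (hn : 2 ≤ n) (A : Matrix (Fin (n - 1)) (Fin (n - 1)) ℂ)
    (x y : Fin (n - 1) → ℂ) (α : ℂ)
    (h : ∀ lam : ℂ, lam ≠ 0 →
      (Matrix.fromBlocks (Matrix.replicateCol (Fin 1) x) (A - lam • 1)
          (Matrix.of fun _ _ => α) (Matrix.replicateRow (Fin 1) y)).rank = n - 1 ∧
        (A - lam • (1 : Matrix (Fin (n - 1)) (Fin (n - 1)) ℂ)).rank = n - 1) :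
    α = 0 ∧ IsNilpotent A ∧ ∀ k ≤ n - 1, y ⬝ᵥ (A ^ k).mulVec x = 0 := by
  have hcard : Fintype.card (Fin (n - 1)) = n - 1 := Fintype.card_fin _
  have hunit : ∀ t : ℂ, t ≠ 0 → IsUnit (A - t • 1).det := fun t ht =>
    auxIsUnitDet _ (by rw [(h t ht).2, hcard])
  have hAm : A ^ (n - 1) = 0 := by
    have := auxPowEqZero A hunit
    rwa [hcard] at this
  have halpha : ∀ t : ℂ, t ≠ 0 → α = y ⬝ᵥ (A - t • 1)⁻¹.mulVec x := fun t ht =>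
    auxSchur _ x y α (hunit t ht) (by rw [(h t ht).1, hcard])
  set c : ℕ → ℂ := fun k => y ⬝ᵥ (A ^ k).mulVec x with hc
  have hkey : ∀ t : ℂ, t ≠ 0 →
      α + ∑ k ∈ Finset.range (n - 1), (t⁻¹)^(k+1) * c k = 0 := by
    intro t ht
    have h1 := halpha t ht
    rw [auxInv A (n - 1) hAm t ht, Matrix.neg_mulVec, dotProduct_neg,
      auxDotSum y x _ (fun k => (t⁻¹)^(k+1) • A ^ k)] at h1
    have h2 : ∑ k ∈ Finset.range (n - 1), y ⬝ᵥ ((t⁻¹)^(k+1) • A ^ k).mulVec x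
        = ∑ k ∈ Finset.range (n - 1), (t⁻¹)^(k+1) * c k := by
      apply Finset.sum_congr rfl
      intro k _
      rw [Matrix.smul_mulVec, dotProduct_smul]
      simp [hc]
    rw [h2] at h1
    rw [h1]
    ring
  set p : ℂ[X] := C α * X^(n-1) + ∑ k ∈ Finset.range (n - 1), C (c k) * X^(n-1-1-k) with hp
  have hproot : ∀ t : ℂ, t ≠ 0 → p.eval t = 0 := by
    intro t ht
    have : p.eval t = t^(n-1) * (α + ∑ k ∈ Finset.range (n - 1), (t⁻¹)^(k+1) * c k) := by
      rw [hp]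
      simp only [eval_add, eval_mul, eval_C, eval_pow, eval_X, eval_finset_sum, mul_add,
        Finset.mul_sum]
      congr 1
      · ring
      apply Finset.sum_congr rfl
      intro k hk
      have hk' : k < n - 1 := Finset.mem_range.mp hk
      have hexp : (n-1-1-k) + (k+1) = n-1 := by omega
      rw [← hexp, pow_add]
      rw [show n - 1 - 1 - k + (k + 1) - 1 - k = n - 1 - 1 - k by omega]
      rw [show ∀ u : ℂ, t ^ (n - 1 - 1 - k) * t ^ (k + 1) * (t⁻¹ ^ (k + 1) * u)
          = t ^ (n - 1 - 1 - k) * u * (t * t⁻¹) ^ (k + 1) from fun u => by ring,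
        mul_inv_cancel₀ ht, one_pow, mul_one, mul_comm]
    rw [this, hkey t ht, mul_zero]
  have hp0 : p = 0 := by
    apply Polynomial.eq_zero_of_infinite_isRoot
    apply Set.Infinite.mono (s := {t : ℂ | t ≠ 0})
    · intro t ht
      exact hproot t ht
    · exact Set.Finite.infinite_compl (Set.finite_singleton 0)
  have hα : α = 0 := by
    have h1 : p.coeff (n-1) = 0 := by rw [hp0]; simp
    rw [hp] at h1
    simp only [Polynomial.coeff_add, Polynomial.coeff_C_mul, Polynomial.coeff_X_pow,
      Polynomial.finset_sum_coeff] at h1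
    have h2 : ∀ k ∈ Finset.range (n - 1),
        c k * (if n-1 = n-1-1-k then (1:ℂ) else 0) = 0 := by
      intro k hk
      have hk' := Finset.mem_range.mp hk
      have : ¬ (n-1 = n-1-1-k) := by omega
      simp [this]
    rw [Finset.sum_eq_zero h2, add_zero] at h1
    simpa using h1
  have hcoef : ∀ j < n - 1, c j = 0 := by
    intro j hj
    have h1 : p.coeff (n-1-1-j) = 0 := by rw [hp0]; simp
    rw [hp, hα] at h1
    simp only [Polynomial.coeff_add, Polynomial.coeff_C_mul, Polynomial.coeff_X_pow,
      Polynomial.finset_sum_coeff, map_zero, zero_mul, zero_add] at h1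
    have h2 : ∀ k ∈ Finset.range (n - 1),
        c k * (if n-1-1-j = n-1-1-k then (1:ℂ) else 0) = (if k = j then c k else 0) := by
      intro k hk
      have hk' := Finset.mem_range.mp hk
      by_cases he : k = j
      · subst he; simp
      · have hne2 : ¬ (n-1-1-j = n-1-1-k) := by omega
        simp [hne2, he]
    rw [Finset.sum_congr rfl h2, Finset.sum_ite_eq' (Finset.range (n-1)) j c] at h1
    simpa [Finset.mem_range.mpr hj] using h1
  refine ⟨hα, ⟨n - 1, hAm⟩, ?_⟩
  intro k hk
  rcases lt_or_eq_of_le hk with hk' | hk'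
  · exact hcoef k hk'
  · rw [hk', hAm]
    simp
end
end
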